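/- arXiv:1010.2300 — 4 statements merged into one kernel-verified Lean document; each statement's English description precedes it below -/
import Mathlib

section
/- A 5-dimensional smooth quadric hypersurface Q^5 ⊂ P^6 does not contain a copy of the Segre threefold P^1 × P^2 embedded by the Segre embedding. -/
/-- A 5-dimensional smooth quadric `Q^5 ⊂ P^6` (zero locus of a nondegenerate symmetric
bilinear form on `ℂ^7`) does not contain a copy of the Segre threefold `P^1 × P^2`: there is no
injective linear map from `ℂ^2 ⊗ ℂ^3 ≅ ℂ^6` into `ℂ^7` carrying the affine cone over the Segre
variety (the decomposable tensors `a ⊗ b`) into the quadric cone. -/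
theorem quadric5_no_segre_threefold
    (B : (Fin 7 → ℂ) →ₗ[ℂ] (Fin 7 → ℂ) →ₗ[ℂ] ℂ)
    (hsymm : ∀ x y, B x y = B y x)
    (hnondeg : ∀ x, (∀ y, B x y = 0) → x = 0) :
    ¬ ∃ ι : (Fin 2 × Fin 3 → ℂ) →ₗ[ℂ] (Fin 7 → ℂ), Function.Injective ι ∧
        ∀ (a : Fin 2 → ℂ) (b : Fin 3 → ℂ),
          B (ι fun p => a p.1 * b p.2) (ι fun p => a p.1 * b p.2) = 0 := by
  rintro ⟨ι, hinj, h⟩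
  -- the decomposable tensor
  set T : (Fin 2 → ℂ) → (Fin 3 → ℂ) → (Fin 2 × Fin 3 → ℂ) :=
    fun a b p => a p.1 * b p.2 with hTdef
  have h' : ∀ a b, B (ι (T a b)) (ι (T a b)) = 0 := fun a b => h a b
  have hTb : ∀ a b b', T a (b + b') = T a b + T a b' := by
    intro a b b'; funext p; simp [hTdef, mul_add]
  have hTa : ∀ a a' b, T (a + a') b = T a b + T a' b := by
    intro a a' b; funext p; simp [hTdef, add_mul]
  -- polarization identities
  have F2 : ∀ a b b', B (ι (T a b)) (ι (T a b')) = 0 := by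
    intro a b b'
    have h1 := h' a (b + b')
    rw [hTb] at h1
    simp only [map_add, LinearMap.add_apply] at h1
    have hs := hsymm (ι (T a b)) (ι (T a b'))
    linear_combination (h1 - h' a b - h' a b' + hs) / 2
  have F3 : ∀ a a' b, B (ι (T a b)) (ι (T a' b)) = 0 := by
    intro a a' b
    have h1 := h' (a + a') b
    rw [hTa] at h1
    simp only [map_add, LinearMap.add_apply] at h1
    have hs := hsymm (ι (T a b)) (ι (T a' b))
    linear_combination (h1 - h' a b - h' a' b + hs) / 2
  have G : ∀ a a' b b',
      B (ι (T a b)) (ι (T a' b')) + B (ι (T a b')) (ι (T a' b)) = 0 := by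
    intro a a' b b'
    have h1 := h' (a + a') (b + b')
    rw [hTa, hTb, hTb] at h1
    simp only [map_add, LinearMap.add_apply] at h1
    have hs1 := hsymm (ι (T a b)) (ι (T a' b'))
    have hs2 := hsymm (ι (T a b')) (ι (T a' b))
    linear_combination (h1 - h' a b - h' a b' - h' a' b - h' a' b'
      - F2 a b b' - F2 a b' b - F2 a' b b' - F2 a' b' b
      - F3 a a' b - F3 a' a b - F3 a a' b' - F3 a' a b' + hs1 + hs2) / 2
  -- basis decomposables and the antisymmetric matrix c
  set u : Fin 2 → Fin 3 → (Fin 2 × Fin 3 → ℂ) :=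
    fun i j => T (Pi.single i 1) (Pi.single j 1) with hudef
  set c : Fin 3 → Fin 3 → ℂ := fun j j' => B (ι (u 0 j)) (ι (u 1 j')) with hcdef
  have casym : ∀ j j', c j j' + c j' j = 0 := by
    intro j j'
    exact G (Pi.single 0 1) (Pi.single 1 1) (Pi.single j 1) (Pi.single j' 1)
  -- a nonzero kernel vector of c
  obtain ⟨w, hw0, Hc⟩ : ∃ w : Fin 3 → ℂ, w ≠ 0 ∧
      ∀ j', w 0 * c 0 j' + w 1 * c 1 j' + w 2 * c 2 j' = 0 := by
    by_cases hv : (![c 1 2, -(c 0 2), c 0 1] : Fin 3 → ℂ) = 0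
    · refine ⟨![1, 0, 0], ?_, ?_⟩
      · intro h0
        have := congrFun h0 0
        simp at this
      · have e1 := congrFun hv 0
        have e2 := congrFun hv 1
        have e3 := congrFun hv 2
        simp [Matrix.cons_val_zero, Matrix.cons_val_one] at e1 e2 e3
        intro j'
        obtain rfl | rfl | rfl : j' = 0 ∨ j' = 1 ∨ j' = 2 := by omega
        · norm_num [Matrix.cons_val_two, Matrix.vecHead, Matrix.vecTail]
          linear_combination (casym 0 0) / 2 + e1 - e1 + e2 - e2 + e3 - e3
        · norm_num [Matrix.cons_val_two, Matrix.vecHead, Matrix.vecTail]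
          linear_combination e3
        · norm_num [Matrix.cons_val_two, Matrix.vecHead, Matrix.vecTail]
          linear_combination e2
    · refine ⟨_, hv, ?_⟩
      intro j'
      obtain rfl | rfl | rfl : j' = 0 ∨ j' = 1 ∨ j' = 2 := by omega
      · norm_num [Matrix.cons_val_two, Matrix.vecHead, Matrix.vecTail]
        linear_combination (c 1 2 / 2) * casym 0 0 - c 0 2 * casym 0 1 + c 0 1 * casym 0 2
      · norm_num [Matrix.cons_val_two, Matrix.vecHead, Matrix.vecTail]
        linear_combination c 0 1 * casym 1 2 - (c 0 2 / 2) * casym 1 1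
      · norm_num [Matrix.cons_val_two, Matrix.vecHead, Matrix.vecTail]
        linear_combination (c 0 1 / 2) * casym 2 2
  -- the two kernel vectors
  set x1 : Fin 2 × Fin 3 → ℂ := T (Pi.single 0 1) w with hx1def
  set x2 : Fin 2 × Fin 3 → ℂ := T (Pi.single 1 1) w with hx2def
  have hxdec : ∀ i : Fin 2, T (Pi.single i 1) w
      = w 0 • u i 0 + w 1 • u i 1 + w 2 • u i 2 := by
    intro i
    funext p
    simp only [hTdef, hudef, Pi.add_apply, Pi.smul_apply, smul_eq_mul]
    have : w p.2 = w 0 * (Pi.single 0 1 : Fin 3 → ℂ) p.2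
        + w 1 * (Pi.single 1 1 : Fin 3 → ℂ) p.2 + w 2 * (Pi.single 2 1 : Fin 3 → ℂ) p.2 := by
      obtain ⟨p1, p2⟩ := p
      obtain rfl | rfl | rfl : p2 = 0 ∨ p2 = 1 ∨ p2 = 2 := by omega
      all_goals simp
    rw [this]; ring
  have K1 : ∀ (i : Fin 2) (j' : Fin 3), B (ι x1) (ι (u i j')) = 0 := by
    intro i j'
    rw [hx1def, hxdec]
    simp only [map_add, map_smul, LinearMap.add_apply, LinearMap.smul_apply, smul_eq_mul]
    obtain rfl | rfl : i = 0 ∨ i = 1 := by omega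
    · have z0 := F2 (Pi.single 0 1) (Pi.single 0 1) (Pi.single j' 1)
      have z1 := F2 (Pi.single 0 1) (Pi.single 1 1) (Pi.single j' 1)
      have z2 := F2 (Pi.single 0 1) (Pi.single 2 1) (Pi.single j' 1)
      simp only [hudef]
      linear_combination w 0 * z0 + w 1 * z1 + w 2 * z2
    · exact Hc j'
  have K2 : ∀ (i : Fin 2) (j' : Fin 3), B (ι x2) (ι (u i j')) = 0 := by
    intro i j'
    rw [hx2def, hxdec]
    simp only [map_add, map_smul, LinearMap.add_apply, LinearMap.smul_apply, smul_eq_mul]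
    obtain rfl | rfl : i = 0 ∨ i = 1 := by omega
    · have hs0 := hsymm (ι (u 1 0)) (ι (u 0 j'))
      have hs1 := hsymm (ι (u 1 1)) (ι (u 0 j'))
      have hs2 := hsymm (ι (u 1 2)) (ι (u 0 j'))
      linear_combination w 0 * hs0 + w 1 * hs1 + w 2 * hs2
        + w 0 * casym 0 j' + w 1 * casym 1 j' + w 2 * casym 2 j' - Hc j'
    · have z0 := F2 (Pi.single 1 1) (Pi.single 0 1) (Pi.single j' 1)
      have z1 := F2 (Pi.single 1 1) (Pi.single 1 1) (Pi.single j' 1)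
      have z2 := F2 (Pi.single 1 1) (Pi.single 2 1) (Pi.single j' 1)
      simp only [hudef]
      linear_combination w 0 * z0 + w 1 * z1 + w 2 * z2
  -- basis vectors are decomposable
  have husingle : ∀ p : Fin 2 × Fin 3, (Pi.single p (1:ℂ) : Fin 2 × Fin 3 → ℂ) = u p.1 p.2 := by
    rintro ⟨i, j⟩
    funext q
    obtain ⟨q1, q2⟩ := q
    simp only [hudef, hTdef, Pi.single_apply, Prod.mk.injEq]
    by_cases h1 : q1 = i <;> by_cases h2 : q2 = j <;>
      simp [h1, h2, Prod.ext_iff]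
  -- full orthogonality
  have Kfull : ∀ k : Fin 2 × Fin 3 → ℂ, (k = x1 ∨ k = x2) → ∀ y, B (ι k) (ι y) = 0 := by
    rintro k hk y
    have hy : y = ∑ p : Fin 2 × Fin 3, y p • (Pi.single p 1 : Fin 2 × Fin 3 → ℂ) := by
      funext q
      rw [Finset.sum_apply]
      simp [Pi.single_apply]
    rw [hy]
    rw [map_sum, map_sum]
    refine Finset.sum_eq_zero fun p _ => ?_
    rw [map_smul, map_smul, smul_eq_mul, husingle p]
    rcases hk with rfl | rfl
    · rw [K1 p.1 p.2, mul_zero]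
    · rw [K2 p.1 p.2, mul_zero]
  -- linear independence of x1, x2
  obtain ⟨j0, hj0⟩ := Function.ne_iff.mp hw0
  have hj0' : w j0 ≠ 0 := hj0
  have hli : LinearIndependent ℂ ![ι x1, ι x2] := by
    rw [LinearIndependent.pair_iff]
    intro s t hst
    have h0 : s • x1 + t • x2 = 0 := by
      apply hinj
      rw [map_add, map_smul, map_smul, map_zero]
      exact hst
    have e0 := congrFun h0 (0, j0)
    have e1 := congrFun h0 (1, j0)
    simp only [hx1def, hx2def, hTdef, Pi.add_apply, Pi.smul_apply, smul_eq_mul,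
      Pi.zero_apply, Pi.single_apply] at e0 e1
    norm_num at e0 e1
    exact ⟨by simpa [hj0'] using e0, by simpa [hj0'] using e1⟩
  -- the dual map argument
  set Φ : (Fin 7 → ℂ) →ₗ[ℂ] Module.Dual ℂ (Fin 2 × Fin 3 → ℂ) := ι.dualMap.comp B with hΦdef
  have hBsurj : Function.Surjective B := by
    have hBinj : Function.Injective B := by
      intro z z' hzz
      have : ∀ y, B (z - z') y = 0 := by
        intro y
        simp [map_sub, LinearMap.sub_apply, hzz]
      have := hnondeg _ this
      exact sub_eq_zero.mp this
    have hfr : Module.finrank ℂ (Fin 7 → ℂ)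
        = Module.finrank ℂ (Module.Dual ℂ (Fin 7 → ℂ)) :=
      (Subspace.dual_finrank_eq).symm
    exact (LinearMap.injective_iff_surjective_of_finrank_eq_finrank hfr).mp hBinj
  have hΦsurj : Function.Surjective Φ :=
    (LinearMap.dualMap_surjective_of_injective hinj).comp hBsurj
  have hkerfr : Module.finrank ℂ (LinearMap.ker Φ) = 1 := by
    have := LinearMap.finrank_range_add_finrank_ker Φ
    rw [LinearMap.range_eq_top.mpr hΦsurj] at this
    have h6 : Module.finrank ℂ (⊤ : Submodule ℂ (Module.Dual ℂ (Fin 2 × Fin 3 → ℂ))) = 6 := by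
      rw [finrank_top, Subspace.dual_finrank_eq]
      simp [Module.finrank_pi]
    have h7 : Module.finrank ℂ (Fin 7 → ℂ) = 7 := by simp [Module.finrank_pi]
    omega
  have hmem : ∀ k : Fin 2 × Fin 3 → ℂ, (k = x1 ∨ k = x2) → ι k ∈ LinearMap.ker Φ := by
    intro k hk
    rw [LinearMap.mem_ker]
    apply LinearMap.ext
    intro y
    simpa [hΦdef] using Kfull k hk y
  have hspanle : Submodule.span ℂ (Set.range ![ι x1, ι x2]) ≤ LinearMap.ker Φ := by
    rw [Submodule.span_le]
    rintro z ⟨i, rfl⟩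
    fin_cases i
    · exact hmem x1 (Or.inl rfl)
    · exact hmem x2 (Or.inr rfl)
  have h2 : Module.finrank ℂ (Submodule.span ℂ (Set.range ![ι x1, ι x2])) = 2 := by
    rw [finrank_span_eq_card hli]
    simp
  have := Submodule.finrank_mono hspanle
  omega
end

section
/- A smooth 5-dimensional complete intersection of two quadrics X ⊂ P^7 does not contain a linear subspace of dimension 3. -/
open Module Matrix

/-- A smooth 5-dimensional complete intersection of two quadrics `X ⊂ P^7` contains no linear
subspace of dimension 3.  Here `X` is the common zero locus of two symmetric bilinear forms on
`ℂ^8`; smoothness (transversality) says that at every nonzero common zero the two differentials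
are linearly independent.  A `P^3 ⊂ X` corresponds to a 4-dimensional linear subspace of `ℂ^8`
on which both forms vanish. -/
theorem intersection_two_quadrics_no_P3
    (B₁ B₂ : (Fin 8 → ℂ) →ₗ[ℂ] (Fin 8 → ℂ) →ₗ[ℂ] ℂ)
    (hsymm₁ : ∀ x y, B₁ x y = B₁ y x) (hsymm₂ : ∀ x y, B₂ x y = B₂ y x)
    (hsmooth : ∀ x : Fin 8 → ℂ, x ≠ 0 → B₁ x x = 0 → B₂ x x = 0 →
        ∀ a b : ℂ, (∀ v, a * B₁ x v + b * B₂ x v = 0) → a = 0 ∧ b = 0) :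
    ¬ ∃ W : Submodule ℂ (Fin 8 → ℂ), Module.finrank ℂ W = 4 ∧
        ∀ w ∈ W, B₁ w w = 0 ∧ B₂ w w = 0 := by
  rintro ⟨W, hW4, hiso⟩
  -- polarization: both forms vanish identically on W × W
  have hpol : ∀ (B : (Fin 8 → ℂ) →ₗ[ℂ] (Fin 8 → ℂ) →ₗ[ℂ] ℂ),
      (∀ x y, B x y = B y x) → (∀ w ∈ W, B w w = 0) →
      ∀ x ∈ W, ∀ y ∈ W, B x y = 0 := by
    intro B hs h0 x hx y hy
    have h := h0 (x + y) (add_mem hx hy)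
    simp only [map_add, LinearMap.add_apply, h0 x hx, h0 y hy] at h
    have h2 : (2 : ℂ) * B x y = 0 := by
      have := hs y x
      linear_combination h - this
    have := mul_eq_zero.mp h2
    simpa using this
  have hpol₁ := hpol B₁ hsymm₁ (fun w hw => (hiso w hw).1)
  have hpol₂ := hpol B₂ hsymm₂ (fun w hw => (hiso w hw).2)
  obtain ⟨U, hU⟩ := Submodule.exists_isCompl W
  have hUrank : finrank ℂ U = 4 := by
    have h1 := Submodule.finrank_add_eq_of_isCompl hU
    have h2 : finrank ℂ (Fin 8 → ℂ) = 8 := by simp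
    omega
  let bW : Basis (Fin 4) ℂ W := finBasisOfFinrankEq ℂ W hW4
  let bU : Basis (Fin 4) ℂ U := finBasisOfFinrankEq ℂ U hUrank
  let M₁ : Matrix (Fin 4) (Fin 4) ℂ := Matrix.of fun j k => B₁ (bW j) (bU k)
  let M₂ : Matrix (Fin 4) (Fin 4) ℂ := Matrix.of fun j k => B₂ (bW j) (bU k)
  -- key step: no member of the matrix pencil is singular
  have key : ∀ a b : ℂ, ¬ (a = 0 ∧ b = 0) → (a • M₁ + b • M₂).det = 0 → False := by
    intro a b hab hdet
    obtain ⟨c, hc0, hcv⟩ := Matrix.exists_vecMul_eq_zero_iff.mpr hdet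
    set xW : W := ∑ j, c j • bW j with hxW_def
    have hxW0 : xW ≠ 0 := by
      intro h
      apply hc0
      have := bW.linearIndependent
      have h2 : (Finset.univ.sum fun j => c j • bW j) = 0 := h
      ext j
      exact Fintype.linearIndependent_iff.mp this c h2 j
    set x : Fin 8 → ℂ := (xW : Fin 8 → ℂ) with hx_def
    have hxmem : x ∈ W := xW.2
    have hx0 : x ≠ 0 := fun h => hxW0 (Subtype.ext h)
    have hxsum : x = ∑ j, c j • (bW j : Fin 8 → ℂ) := by
      simp [hx_def, hxW_def]
    have hBU : ∀ k, a * B₁ x (bU k) + b * B₂ x (bU k) = 0 := by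
      intro k
      have h := congrFun hcv k
      simp only [Matrix.vecMul, dotProduct, Pi.zero_apply] at h
      have expand : ∀ B : (Fin 8 → ℂ) →ₗ[ℂ] (Fin 8 → ℂ) →ₗ[ℂ] ℂ,
          B x (bU k) = ∑ j, c j * B (bW j) (bU k) := by
        intro B
        rw [hxsum]
        simp [map_sum, _root_.map_smul, LinearMap.coe_sum, Finset.sum_apply,
          LinearMap.smul_apply, smul_eq_mul]
      rw [expand B₁, expand B₂, Finset.mul_sum, Finset.mul_sum, ← Finset.sum_add_distrib, ← h]
      apply Finset.sum_congr rfl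
      intro j _
      simp [M₁, M₂, Matrix.add_apply, Matrix.smul_apply, smul_eq_mul]
      ring
    have hall : ∀ v, a * B₁ x v + b * B₂ x v = 0 := by
      intro v
      have hv : v ∈ W ⊔ U := by rw [hU.sup_eq_top]; trivial
      obtain ⟨w, hw, u, hu, rfl⟩ := Submodule.mem_sup.mp hv
      have huU : (⟨u, hu⟩ : U) = ∑ k, bU.repr ⟨u, hu⟩ k • bU k := (bU.sum_repr ⟨u, hu⟩).symm
      have huV : u = ∑ k, bU.repr ⟨u, hu⟩ k • (bU k : Fin 8 → ℂ) := by
        have := congrArg (Subtype.val) huU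
        refine this.trans ?_
        rw [Submodule.coe_sum]
        rfl
      have hBu : ∀ (B : (Fin 8 → ℂ) →ₗ[ℂ] (Fin 8 → ℂ) →ₗ[ℂ] ℂ),
          B x u = ∑ k, bU.repr ⟨u, hu⟩ k * B x (bU k) := by
        intro B
        conv_lhs => rw [huV]
        simp [map_sum, _root_.map_smul, smul_eq_mul]
      rw [map_add, map_add, hpol₁ x hxmem w hw, hpol₂ x hxmem w hw]
      simp only [zero_add]
      rw [hBu B₁, hBu B₂, Finset.mul_sum, Finset.mul_sum, ← Finset.sum_add_distrib]
      rw [← Finset.sum_const_zero (s := (Finset.univ : Finset (Fin 4)))]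
      apply Finset.sum_congr rfl
      intro k _
      have := hBU k
      ring_nf
      linear_combination (bU.repr ⟨u, hu⟩ k) * this
    exact hab (hsmooth x hx0 (hiso x hxmem).1 (hiso x hxmem).2 a b hall)
  by_cases h2 : M₂.det = 0
  · exact key 0 1 (by simp) (by simpa using h2)
  · -- M₂ invertible: find t with det (M₁ + t • M₂) = 0 via the characteristic polynomial
    set A : Matrix (Fin 4) (Fin 4) ℂ := -((M₂⁻¹) * M₁) with hA
    have hdeg : 0 < A.charpoly.degree := by
      rw [Matrix.charpoly_degree_eq_dim]
      simp
    obtain ⟨r, hr⟩ := Complex.exists_root hdeg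
    have heval : A.charpoly.eval r = (r • (1 : Matrix (Fin 4) (Fin 4) ℂ) - A).det := by
      rw [Matrix.charpoly, ← Polynomial.coe_evalRingHom, RingHom.map_det]
      congr 1
      ext i j
      by_cases hij : i = j <;>
        simp [Matrix.charmatrix_apply, hij, Matrix.one_apply, Matrix.diagonal]
    have hdet0 : (M₂⁻¹ * M₁ + r • (1 : Matrix (Fin 4) (Fin 4) ℂ)).det = 0 := by
      have : r • (1 : Matrix (Fin 4) (Fin 4) ℂ) - A = M₂⁻¹ * M₁ + r • 1 := by
        rw [hA, sub_neg_eq_add, add_comm]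
      rw [← this, ← heval]
      exact hr
    have hmain : (M₁ + r • M₂).det = 0 := by
      have hinv : M₂ * M₂⁻¹ = 1 := Matrix.mul_nonsing_inv M₂ (isUnit_iff_ne_zero.mpr h2)
      have : M₁ + r • M₂ = M₂ * (M₂⁻¹ * M₁ + r • 1) := by
        rw [Matrix.mul_add, ← Matrix.mul_assoc, hinv, Matrix.one_mul, Matrix.mul_smul,
          Matrix.mul_one]
      rw [this, Matrix.det_mul, hdet0, mul_zero]
    exact key 1 r (by simp) (by simpa using hmain)
end

section
/- A smooth (2n+1)-dimensional complete intersection X ⊂ P^{2n+3} of two quadrics is swept out by n-dimensional linear subspaces: through every point of X there passes a linear subspace P^n contained in X. -/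
open Matrix Polynomial BigOperators

noncomputable section

namespace TwoQuadrics

variable {d e m : ℕ}

/-- pairing of a matrix -/
abbrev pr (A : Matrix (Fin d) (Fin d) ℂ) (x y : Fin d → ℂ) : ℂ := x ⬝ᵥ A.mulVec y

lemma pr_eq_sum (A : Matrix (Fin d) (Fin d) ℂ) (x y : Fin d → ℂ) :
    pr A x y = ∑ i, ∑ j, x i * A i j * y j := by
  simp [pr, Matrix.mulVec, dotProduct, Finset.mul_sum, mul_assoc]

lemma pr_symm {A : Matrix (Fin d) (Fin d) ℂ} (hA : Aᵀ = A) (x y : Fin d → ℂ) :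
    pr A x y = pr A y x := by
  rw [pr_eq_sum, pr_eq_sum, Finset.sum_comm]
  refine Finset.sum_congr rfl fun j _ => Finset.sum_congr rfl fun i _ => ?_
  have h : A j i = A i j := by conv_lhs => rw [← hA, Matrix.transpose_apply]
  rw [h]; ring

lemma mulVec_sum_smul (A : Matrix (Fin d) (Fin d) ℂ) {ι : Type*} (s : Finset ι)
    (g : ι → ℂ) (w : ι → (Fin d → ℂ)) :
    A.mulVec (∑ j ∈ s, g j • w j) = ∑ j ∈ s, g j • A.mulVec (w j) := by
  simp only [← Matrix.mulVecLin_apply, map_sum, _root_.map_smul]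

lemma pr_sum_left (A : Matrix (Fin d) (Fin d) ℂ) {ι : Type*} (s : Finset ι)
    (f : ι → ℂ) (u : ι → (Fin d → ℂ)) (y : Fin d → ℂ) :
    pr A (∑ i ∈ s, f i • u i) y = ∑ i ∈ s, f i * pr A (u i) y := by
  simp only [pr, dotProduct, Finset.sum_apply, Pi.smul_apply, smul_eq_mul,
    Finset.sum_mul, Finset.mul_sum, mul_assoc]
  exact Finset.sum_comm

lemma pr_sum_right (A : Matrix (Fin d) (Fin d) ℂ) {ι : Type*} (s : Finset ι)
    (g : ι → ℂ) (w : ι → (Fin d → ℂ)) (x : Fin d → ℂ) :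
    pr A x (∑ j ∈ s, g j • w j) = ∑ j ∈ s, g j * pr A x (w j) := by
  rw [pr, mulVec_sum_smul]
  simp only [pr, dotProduct, Finset.sum_apply, Pi.smul_apply, smul_eq_mul,
    Finset.mul_sum]
  rw [Finset.sum_comm]
  refine Finset.sum_congr rfl fun j _ => Finset.sum_congr rfl fun i _ => by ring

lemma pr_sum_sum (A : Matrix (Fin d) (Fin d) ℂ) {ι κ : Type*} [Fintype ι] [Fintype κ]
    (f : ι → ℂ) (u : ι → (Fin d → ℂ)) (g : κ → ℂ) (w : κ → (Fin d → ℂ)) :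
    pr A (∑ i, f i • u i) (∑ j, g j • w j) = ∑ i, ∑ j, f i * g j * pr A (u i) (w j) := by
  rw [pr_sum_left]
  refine Finset.sum_congr rfl fun i _ => ?_
  rw [pr_sum_right, Finset.mul_sum]
  exact Finset.sum_congr rfl fun j _ => by ring

end TwoQuadrics

noncomputable section
namespace TwoQuadrics
open Finset

lemma coeff_lagrange_basis {d : ℕ} (μ : Fin d → ℂ) (hμ : Function.Injective μ) (i : Fin d) :
    (Lagrange.basis Finset.univ μ i).coeff (d - 1) =
      (∏ j ∈ Finset.univ.erase i, (μ i - μ j))⁻¹ := by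
  rw [Lagrange.basis]
  have h1 : ∀ j ∈ Finset.univ.erase i, Lagrange.basisDivisor (μ i) (μ j)
      = Polynomial.C (μ i - μ j)⁻¹ * (Polynomial.X - Polynomial.C (μ j)) := fun j _ => rfl
  rw [Finset.prod_congr rfl h1, Finset.prod_mul_distrib]
  have hC := map_prod (Polynomial.C : ℂ →+* ℂ[X]) (fun x => (μ i - μ x)⁻¹) (Finset.univ.erase i)
  rw [← hC]
  have hmon : (∏ j ∈ Finset.univ.erase i, (Polynomial.X - Polynomial.C (μ j))).Monic :=
    Polynomial.monic_prod_of_monic _ _ fun j _ => Polynomial.monic_X_sub_C _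
  have hdeg : (∏ j ∈ Finset.univ.erase i, (Polynomial.X - Polynomial.C (μ j))).natDegree = d - 1 := by
    rw [Polynomial.natDegree_prod_of_monic _ _ fun j _ => Polynomial.monic_X_sub_C _]
    simp [Polynomial.natDegree_X_sub_C, Finset.card_erase_of_mem]
  rw [Polynomial.coeff_C_mul, ← hdeg, hmon.coeff_natDegree, mul_one, ← Finset.prod_inv_distrib]

lemma sumid {d : ℕ} (μ : Fin d → ℂ) (hμ : Function.Injective μ) {r : ℕ} (hr : r + 2 ≤ d) :
    ∑ i, μ i ^ r * (∏ j ∈ Finset.univ.erase i, (μ i - μ j))⁻¹ = 0 := by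
  have hvs : Set.InjOn μ ↑(Finset.univ : Finset (Fin d)) := fun a _ b _ h => hμ h
  have hcard : (Finset.univ : Finset (Fin d)).card = d := Finset.card_univ.trans (Fintype.card_fin d)
  have hdeg : (Polynomial.X ^ r : ℂ[X]).degree < (Finset.univ : Finset (Fin d)).card := by
    rw [Polynomial.degree_X_pow, hcard]
    exact_mod_cast Nat.lt_of_lt_of_le (by omega) (le_refl d)
  have hint := Lagrange.eq_interpolate (f := (Polynomial.X ^ r : ℂ[X])) hvs hdeg
  have hco := congrArg (fun p => Polynomial.coeff p (d - 1)) hint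
  simp only [Polynomial.coeff_X_pow] at hco
  rw [if_neg (by omega : ¬ d - 1 = r)] at hco
  rw [Lagrange.interpolate_apply] at hco
  rw [Polynomial.finset_sum_coeff] at hco
  symm at hco
  calc ∑ i, μ i ^ r * (∏ j ∈ Finset.univ.erase i, (μ i - μ j))⁻¹
      = ∑ i, Polynomial.coeff (Polynomial.C (Polynomial.eval (μ i) (Polynomial.X ^ r : ℂ[X])) * Lagrange.basis Finset.univ μ i) (d-1) := by
        refine Finset.sum_congr rfl fun i _ => ?_
        rw [Polynomial.coeff_C_mul, coeff_lagrange_basis μ hμ i]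
        simp
    _ = 0 := hco

end TwoQuadrics
end

noncomputable section
namespace TwoQuadrics
open Finset

lemma exists_sqrt (w : ℂ) : ∃ z : ℂ, z * z = w := by
  obtain ⟨z, hz⟩ := IsAlgClosed.exists_pow_nat_eq w (by norm_num : (0:ℕ) < 2)
  exact ⟨z, by rw [← hz]; ring⟩

lemma poly_vanish {m d : ℕ} (hmd : m ≤ d) (μ : Fin d → ℂ) (hμ : Function.Injective μ)
    (c : Fin m → ℂ) (h : ∀ i : Fin d, ∑ j : Fin m, c j * μ i ^ (j : ℕ) = 0) :
    ∀ j, c j = 0 := by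
  by_contra hc
  push_neg at hc
  obtain ⟨j₀, hj₀⟩ := hc
  set p : ℂ[X] := ∑ j : Fin m, Polynomial.C (c j) * Polynomial.X ^ (j : ℕ) with hp
  have hcoeff : ∀ j : Fin m, p.coeff (j : ℕ) = c j := by
    intro j
    rw [hp, Polynomial.finset_sum_coeff]
    rw [Finset.sum_eq_single j]
    · simp
    · intro b _ hbj
      rw [Polynomial.coeff_C_mul, Polynomial.coeff_X_pow, if_neg (by
        intro hh; exact hbj (Fin.ext (by omega)))]
      ring
    · intro hj; exact absurd (Finset.mem_univ j) hj
  have hpne : p ≠ 0 := fun h0 => hj₀ (by rw [← hcoeff j₀, h0, Polynomial.coeff_zero])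
  have hdeg : p.natDegree < m := by
    have : p.natDegree ≤ m - 1 := by
      rw [hp]
      refine le_trans (Polynomial.natDegree_sum_le _ _) ?_
      rw [Finset.fold_max_le]
      constructor
      · omega
      · intro j _
        refine le_trans (Polynomial.natDegree_C_mul_le _ _) ?_
        rw [Polynomial.natDegree_X_pow]
        omega
    have hm : 0 < m := Fin.pos_iff_nonempty.mpr ⟨j₀⟩
    omega
  have hroots : ∀ i : Fin d, p.IsRoot (μ i) := by
    intro i
    have : p.eval (μ i) = ∑ j : Fin m, c j * μ i ^ (j : ℕ) := by
      rw [hp, Polynomial.eval_finset_sum]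
      exact Finset.sum_congr rfl fun j _ => by simp
    rw [Polynomial.IsRoot, this, h i]
  have hsub : (Finset.univ.image μ) ⊆ p.roots.toFinset := by
    intro z hz
    obtain ⟨i, _, rfl⟩ := Finset.mem_image.mp hz
    rw [Multiset.mem_toFinset, Polynomial.mem_roots hpne]
    exact hroots i
  have hcard : d ≤ p.roots.toFinset.card := by
    have h1 : (Finset.univ.image μ).card = d := by
      rw [Finset.card_image_of_injective _ hμ, Finset.card_univ, Fintype.card_fin]
    calc d = (Finset.univ.image μ).card := h1.symm
      _ ≤ p.roots.toFinset.card := Finset.card_le_card hsub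
  have := p.roots.toFinset_card_le
  have := Polynomial.card_roots' p
  omega

lemma diag_sol {d : ℕ} (A B : Matrix (Fin d) (Fin d) ℂ)
    (k : Fin d → (Fin d → ℂ)) (hk : LinearIndependent ℂ k)
    (a b μ : Fin d → ℂ) (ha : ∀ i, a i ≠ 0) (hμ : Function.Injective μ)
    (hb : ∀ i, b i = μ i * a i)
    (hAk : ∀ i j, pr A (k i) (k j) = if i = j then a i else 0)
    (hBk : ∀ i j, pr B (k i) (k j) = if i = j then b i else 0) :
    ∃ c : Fin ((d-1)/2) → (Fin d → ℂ), LinearIndependent ℂ c ∧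
      ∀ j l, pr A (c j) (c l) = 0 ∧ pr B (c j) (c l) = 0 := by
  set m := (d-1)/2 with hm
  have hdm : 2 * m ≤ d - 1 ∧ d - 1 < 2 * m + 2 := by omega
  -- nonzero products
  have hprodne : ∀ i, (∏ j ∈ Finset.univ.erase i, (μ i - μ j)) ≠ 0 := by
    intro i
    refine Finset.prod_ne_zero_iff.mpr fun j hj => ?_
    have : j ≠ i := (Finset.mem_erase.mp hj).1
    exact sub_ne_zero_of_ne (fun h => this (hμ h).symm)
  choose α hα using fun i => exists_sqrt ((a i * ∏ j ∈ Finset.univ.erase i, (μ i - μ j))⁻¹)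
  have hαne : ∀ i, α i ≠ 0 := by
    intro i h0
    have := hα i
    rw [h0, mul_zero] at this
    exact (inv_ne_zero (mul_ne_zero (ha i) (hprodne i))) this.symm
  have hαa : ∀ i, α i * α i * a i = (∏ j ∈ Finset.univ.erase i, (μ i - μ j))⁻¹ := by
    intro i
    rw [hα i, mul_inv]
    field_simp
    rw [div_eq_div_iff (mul_ne_zero (ha i) (hprodne i)) (hprodne i)]
    ring
  refine ⟨fun j => ∑ i, (μ i ^ (j : ℕ) * α i) • k i, ?_, ?_⟩
  · rw [Fintype.linearIndependent_iff]
    intro g hg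
    have hre : ∑ j : Fin m, g j • ∑ i, (μ i ^ (j : ℕ) * α i) • k i
        = ∑ i, ((∑ j : Fin m, g j * μ i ^ (j : ℕ)) * α i) • k i := by
      calc ∑ j : Fin m, g j • ∑ i, (μ i ^ (j:ℕ) * α i) • k i
          = ∑ j : Fin m, ∑ i, (g j * (μ i ^ (j:ℕ) * α i)) • k i := by
            refine Finset.sum_congr rfl fun j _ => ?_
            rw [Finset.smul_sum]
            exact Finset.sum_congr rfl fun i _ => (smul_smul _ _ _)
        _ = ∑ i, ∑ j : Fin m, (g j * (μ i ^ (j:ℕ) * α i)) • k i := Finset.sum_comm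
        _ = ∑ i, ((∑ j : Fin m, g j * μ i ^ (j:ℕ)) * α i) • k i := by
            refine Finset.sum_congr rfl fun i _ => ?_
            rw [← Finset.sum_smul, Finset.sum_mul]
            congr 1
            exact Finset.sum_congr rfl fun j _ => by ring
    rw [hre] at hg
    have hco := Fintype.linearIndependent_iff.mp hk _ hg
    have hz : ∀ i : Fin d, ∑ j : Fin m, g j * μ i ^ (j : ℕ) = 0 := by
      intro i
      have := hco i
      rcases mul_eq_zero.mp this with h | h
      · exact h
      · exact absurd h (hαne i)
    exact poly_vanish (by omega) μ hμ g hz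
  · intro j l
    have hexp : ∀ (C : Matrix (Fin d) (Fin d) ℂ),
        pr C (∑ i, (μ i ^ (j : ℕ) * α i) • k i) (∑ i, (μ i ^ (l : ℕ) * α i) • k i)
        = ∑ i, ∑ i', (μ i ^ (j : ℕ) * α i) * (μ i' ^ (l : ℕ) * α i') * pr C (k i) (k i') :=
      fun C => pr_sum_sum C _ _ _ _
    have hj2 : (j : ℕ) + (l : ℕ) + 2 ≤ d := by
      have := j.isLt; have := l.isLt; omega
    constructor
    · rw [hexp A]
      have : ∀ i : Fin d, ∑ i' : Fin d, (μ i ^ (j : ℕ) * α i) * (μ i' ^ (l : ℕ) * α i') * pr A (k i) (k i')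
          = μ i ^ ((j : ℕ) + (l : ℕ)) * (∏ j' ∈ Finset.univ.erase i, (μ i - μ j'))⁻¹ := by
        intro i
        rw [Finset.sum_eq_single i]
        · rw [hAk i i, if_pos rfl, ← hαa i, pow_add]; ring
        · intro b' _ hb'; rw [hAk i b', if_neg (fun h => hb' h.symm)]; ring
        · intro h; exact absurd (Finset.mem_univ i) h
      rw [Finset.sum_congr rfl (fun i _ => this i)]
      exact sumid μ hμ hj2
    · rw [hexp B]
      have : ∀ i : Fin d, ∑ i' : Fin d, (μ i ^ (j : ℕ) * α i) * (μ i' ^ (l : ℕ) * α i') * pr B (k i) (k i')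
          = μ i ^ ((j : ℕ) + (l : ℕ) + 1) * (∏ j' ∈ Finset.univ.erase i, (μ i - μ j'))⁻¹ := by
        intro i
        rw [Finset.sum_eq_single i]
        · rw [hBk i i, if_pos rfl, hb i, ← hαa i, pow_add, pow_add]; ring
        · intro b' _ hb'; rw [hBk i b', if_neg (fun h => hb' h.symm)]; ring
        · intro h; exact absurd (Finset.mem_univ i) h
      rw [Finset.sum_congr rfl (fun i _ => this i)]
      exact sumid μ hμ (by omega)

end TwoQuadrics
end

noncomputable section
namespace TwoQuadrics
open Finset

variable {d e m : ℕ}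

lemma eq_zero_of_dot_family (z : Fin d → ℂ) (fam : Fin d → (Fin d → ℂ))
    (hfam : LinearIndependent ℂ fam) (h : ∀ i, z ⬝ᵥ fam i = 0) : z = 0 := by
  rcases Nat.eq_zero_or_pos d with hd | hd
  · subst hd; funext i; exact absurd i.isLt (by omega)
  have : Nonempty (Fin d) := ⟨⟨0, hd⟩⟩
  have hspan : Submodule.span ℂ (Set.range fam) = ⊤ :=
    hfam.span_eq_top_of_card_eq_finrank (by
      rw [Fintype.card_fin, Module.finrank_fin_fun])
  have hall : ∀ x : Fin d → ℂ, z ⬝ᵥ x = 0 := by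
    intro x
    have hx : x ∈ Submodule.span ℂ (Set.range fam) := by rw [hspan]; trivial
    induction hx using Submodule.span_induction with
    | mem y hy => obtain ⟨i, rfl⟩ := hy; exact h i
    | zero => simp [dotProduct]
    | add y₁ y₂ _ _ h1 h2 => rw [dotProduct_add, h1, h2, add_zero]
    | smul c y _ hy =>
        rw [dotProduct_smul, hy, smul_zero]
  funext i
  have := hall (Pi.single i 1)
  rwa [dotProduct_single, mul_one] at this

/-- a common isotropic vector whose two polar functionals are linearly dependent -/
def Good (A B : Matrix (Fin d) (Fin d) ℂ) : Prop :=
  ∃ v : Fin d → ℂ, v ≠ 0 ∧ pr A v v = 0 ∧ pr B v v = 0 ∧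
    ∃ a b : ℂ, (a ≠ 0 ∨ b ≠ 0) ∧ a • A.mulVec v + b • B.mulVec v = 0

lemma pr_add_smul (A B : Matrix (Fin d) (Fin d) ℂ) (σ : ℂ) (x y : Fin d → ℂ) :
    pr (A + σ • B) x y = pr A x y + σ * pr B x y := by
  simp [pr, Matrix.add_mulVec, dotProduct_add, Matrix.smul_mulVec,
    dotProduct_smul]

lemma good_swap {A B : Matrix (Fin d) (Fin d) ℂ} (h : Good B A) : Good A B := by
  obtain ⟨v, hv, h1, h2, a, b, hab, hfun⟩ := h
  exact ⟨v, hv, h2, h1, b, a, hab.symm, by rw [← hfun]; abel⟩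

lemma good_shear {A B : Matrix (Fin d) (Fin d) ℂ} (σ : ℂ) (h : Good (A + σ • B) B) :
    Good A B := by
  obtain ⟨v, hv, h1, h2, a, b, hab, hfun⟩ := h
  refine ⟨v, hv, ?_, h2, a, a * σ + b, ?_, ?_⟩
  · have h3 := pr_add_smul A B σ v v
    rw [h1, h2, mul_zero, add_zero] at h3
    exact h3.symm
  · rcases hab with ha | hb
    · exact Or.inl ha
    · by_cases ha : a = 0
      · right; rw [ha]; simpa using hb
      · exact Or.inl ha
  · have : (A + σ • B).mulVec v = A.mulVec v + σ • B.mulVec v := by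
      rw [Matrix.add_mulVec, Matrix.smul_mulVec]
    rw [this] at hfun
    rw [← hfun]
    module

lemma eval_charpoly' (M : Matrix (Fin d) (Fin d) ℂ) (σ : ℂ) :
    M.charpoly.eval σ = (σ • (1 : Matrix (Fin d) (Fin d) ℂ) - M).det := by
  rw [Matrix.charpoly, eval_det, matPolyEquiv_charmatrix]
  rw [Polynomial.eval_sub, Polynomial.eval_X, Polynomial.eval_C]
  congr 1
  ext i j
  simp [Matrix.diagonal_apply, Matrix.one_apply, Matrix.smul_apply, Pi.algebraMap_apply,
    Algebra.algebraMap_self_apply]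

lemma exists_degenerate (hd : 0 < d) (A B : Matrix (Fin d) (Fin d) ℂ) :
    (∃ v, v ≠ 0 ∧ B.mulVec v = 0) ∨ (∃ σ : ℂ, ∃ v, v ≠ 0 ∧ (A + σ • B).mulVec v = 0) := by
  by_cases hB : B.det = 0
  · left
    obtain ⟨v, hv, h⟩ := (Matrix.exists_mulVec_eq_zero_iff).mpr hB
    exact ⟨v, hv, h⟩
  · right
    set N : Matrix (Fin d) (Fin d) ℂ := -(B⁻¹ * A) with hN
    have hdeg : N.charpoly.degree ≠ 0 := by
      rw [Matrix.charpoly_degree_eq_dim, Fintype.card_fin]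
      exact_mod_cast (by omega : d ≠ 0)
    obtain ⟨σ, hσ⟩ := IsAlgClosed.exists_root N.charpoly hdeg
    refine ⟨σ, ?_⟩
    have hev : (σ • (1 : Matrix (Fin d) (Fin d) ℂ) - N).det = 0 := by
      rw [← eval_charpoly']; exact hσ
    have hexp : σ • (1 : Matrix (Fin d) (Fin d) ℂ) - N = B⁻¹ * (A + σ • B) := by
      rw [hN, sub_neg_eq_add, Matrix.mul_add, Matrix.mul_smul,
        Matrix.nonsing_inv_mul B (Ne.isUnit hB)]
      abel
    rw [hexp, Matrix.det_mul] at hev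
    have hBinv : (B⁻¹).det ≠ 0 := by
      rw [Matrix.det_nonsing_inv, Ring.inverse_eq_inv]
      exact inv_ne_zero hB
    have : (A + σ • B).det = 0 := by
      rcases mul_eq_zero.mp hev with h | h
      · exact absurd h hBinv
      · exact h
    obtain ⟨v, hv, h⟩ := (Matrix.exists_mulVec_eq_zero_iff).mpr this
    exact ⟨v, hv, h⟩

end TwoQuadrics
end

noncomputable section
namespace TwoQuadrics
open Finset Module

variable {d e m : ℕ}

/-- dot product with a fixed vector, as a linear functional -/
def dotL (g : Fin d → ℂ) : (Fin d → ℂ) →ₗ[ℂ] ℂ where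
  toFun x := g ⬝ᵥ x
  map_add' x y := dotProduct_add g x y
  map_smul' c x := by simp [dotProduct_smul, smul_eq_mul]

lemma finrank_ker_dotL {g : Fin d → ℂ} (hg : g ≠ 0) :
    finrank ℂ (LinearMap.ker (dotL g)) = d - 1 := by
  have h := LinearMap.finrank_range_add_finrank_ker (dotL g)
  rw [Module.finrank_fin_fun] at h
  have hrange : finrank ℂ (LinearMap.range (dotL g)) = 1 := by
    have hle : finrank ℂ (LinearMap.range (dotL g)) ≤ 1 := by
      have := Submodule.finrank_le (LinearMap.range (dotL g))
      simpa using this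
    have hne : LinearMap.range (dotL g) ≠ ⊥ := by
      intro hbot
      obtain ⟨i, hi⟩ : ∃ i, g i ≠ 0 := by
        by_contra hh; push_neg at hh; exact hg (funext hh)
      have : dotL g (Pi.single i 1) = 0 := by
        have : dotL g (Pi.single i 1) ∈ LinearMap.range (dotL g) := ⟨_, rfl⟩
        rw [hbot] at this; simpa using this
      rw [show dotL g (Pi.single i 1) = g ⬝ᵥ Pi.single i 1 from rfl,
        dotProduct_single, mul_one] at this
      exact hi this
    have : 0 < finrank ℂ (LinearMap.range (dotL g)) := by
      rcases Nat.eq_zero_or_pos (finrank ℂ (LinearMap.range (dotL g))) with h0 | h0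
      · exact absurd (Submodule.finrank_eq_zero.mp h0) hne
      · exact h0
    omega
  omega

lemma subspace_family (U : Submodule ℂ (Fin d → ℂ)) :
    ∃ w : Fin (finrank ℂ U) → (Fin d → ℂ), LinearIndependent ℂ w ∧ (∀ i, w i ∈ U) ∧
      ∀ x ∈ U, x ∈ Submodule.span ℂ (Set.range w) := by
  have b := Module.finBasis ℂ U
  refine ⟨fun i => ((b i : U) : Fin d → ℂ), ?_, fun i => (b i).2, ?_⟩
  · exact b.linearIndependent.map' U.subtype U.ker_subtype
  · intro x hx
    have : Set.range (fun i => ((b i : U) : Fin d → ℂ)) = U.subtype '' Set.range b := by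
      rw [← Set.range_comp]; rfl
    rw [this, ← Submodule.map_span, b.span_eq]
    exact ⟨⟨x, hx⟩, by simp, rfl⟩

lemma lin_indep_comb {w : Fin e → (Fin d → ℂ)} (hw : LinearIndependent ℂ w)
    {c : Fin m → (Fin e → ℂ)} (hc : LinearIndependent ℂ c) :
    LinearIndependent ℂ (fun j => ∑ i, c j i • w i) := by
  rw [Fintype.linearIndependent_iff]
  intro g hg
  have hre : ∑ j : Fin m, g j • ∑ i, c j i • w i = ∑ i, (∑ j : Fin m, g j * c j i) • w i := by
    calc ∑ j : Fin m, g j • ∑ i, c j i • w i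
        = ∑ j : Fin m, ∑ i, (g j * c j i) • w i := by
          refine Finset.sum_congr rfl fun j _ => ?_
          rw [Finset.smul_sum]
          exact Finset.sum_congr rfl fun i _ => (smul_smul _ _ _)
      _ = ∑ i, ∑ j : Fin m, (g j * c j i) • w i := Finset.sum_comm
      _ = ∑ i, (∑ j : Fin m, g j * c j i) • w i := by
          refine Finset.sum_congr rfl fun i _ => ?_
          rw [← Finset.sum_smul]
  rw [hre] at hg
  have h2 := Fintype.linearIndependent_iff.mp hw _ hg
  intro j
  have h3 : ∑ j' : Fin m, g j' • c j' = 0 := by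
    funext i
    have := h2 i
    simpa [Finset.sum_apply] using this
  exact Fintype.linearIndependent_iff.mp hc _ h3 j

lemma pr_comb (C : Matrix (Fin d) (Fin d) ℂ) (w : Fin e → (Fin d → ℂ)) (c c' : Fin e → ℂ) :
    pr C (∑ i, c i • w i) (∑ i, c' i • w i)
      = pr (Matrix.of fun i j => pr C (w i) (w j)) c c' := by
  rw [pr_sum_sum, pr_eq_sum]
  refine Finset.sum_congr rfl fun i _ => Finset.sum_congr rfl fun j _ => ?_
  simp only [Matrix.of_apply]
  ring

end TwoQuadrics
end

noncomputable section
namespace TwoQuadrics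
open Finset Module

variable {d e m : ℕ}

/-- diagonalization statement for "bad" (no good vector) pairs -/
def DiagStmt (d : ℕ) (P Q : Matrix (Fin d) (Fin d) ℂ) : Prop :=
  ∃ k : Fin d → (Fin d → ℂ), LinearIndependent ℂ k ∧
    (∀ i j, i ≠ j → pr P (k i) (k j) = 0 ∧ pr Q (k i) (k j) = 0) ∧
    (∀ i, pr P (k i) (k i) ≠ 0 ∨ pr Q (k i) (k i) ≠ 0)

lemma bad_diag_core {d' : ℕ}
    (IH : ∀ (P' Q' : Matrix (Fin d') (Fin d') ℂ), P'ᵀ = P' → Q'ᵀ = Q' → ¬ Good P' Q' →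
      DiagStmt d' P' Q')
    (P Q : Matrix (Fin (d'+1)) (Fin (d'+1)) ℂ) (hP : Pᵀ = P) (hQ : Qᵀ = Q)
    (hgood : ¬ Good P Q) (k₀ : Fin (d'+1) → ℂ) (hk₀ : k₀ ≠ 0) (hker : P.mulVec k₀ = 0) :
    DiagStmt (d'+1) P Q := by
  have hPk0 : pr P k₀ k₀ = 0 := by simp [pr, hker]
  have hQk0 : pr Q k₀ k₀ ≠ 0 := by
    intro h0
    exact hgood ⟨k₀, hk₀, hPk0, h0, 1, 0, Or.inl one_ne_zero, by simp [hker]⟩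
  set g := Q.mulVec k₀ with hgdef
  have hgk0 : g ⬝ᵥ k₀ = pr Q k₀ k₀ := by
    rw [dotProduct_comm]
  have hgne : g ≠ 0 := by
    intro h
    apply hQk0
    rw [← hgk0, h, zero_dotProduct]
  set U := LinearMap.ker (dotL g) with hUdef
  have hUrank : finrank ℂ U = d' := by
    rw [hUdef, finrank_ker_dotL hgne]
    omega
  have hmemU : ∀ x, x ∈ U ↔ g ⬝ᵥ x = 0 := fun x => Iff.rfl
  obtain ⟨w₀, hw₀, hw₀U, hw₀span⟩ := subspace_family U
  set w : Fin d' → (Fin (d'+1) → ℂ) := w₀ ∘ (Fin.cast hUrank.symm) with hwdef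
  have hw : LinearIndependent ℂ w := hw₀.comp _ (Fin.cast_injective _)
  have hwU : ∀ i, w i ∈ U := fun i => hw₀U _
  have hwspan : ∀ x ∈ U, x ∈ Submodule.span ℂ (Set.range w) := by
    intro x hx
    have hsurj : Function.Surjective (Fin.cast hUrank.symm) := fun x =>
      ⟨Fin.cast hUrank x, by ext; simp⟩
    have : Set.range w = Set.range w₀ :=
      Function.Surjective.range_comp hsurj w₀
    rw [this]
    exact hw₀span x hx
  -- perpendicularity of U elements to k₀
  have hperpQ : ∀ x ∈ U, pr Q x k₀ = 0 := by
    intro x hx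
    have h : g ⬝ᵥ x = 0 := hx
    show x ⬝ᵥ Q.mulVec k₀ = 0
    rw [← hgdef, dotProduct_comm]
    exact h
  have hperpQ' : ∀ x ∈ U, pr Q k₀ x = 0 := fun x hx => by
    rw [pr_symm hQ]; exact hperpQ x hx
  have hperpP : ∀ x : Fin (d'+1) → ℂ, pr P x k₀ = 0 := by
    intro x
    show x ⬝ᵥ P.mulVec k₀ = 0
    rw [hker, dotProduct_zero]
  have hperpP' : ∀ x, pr P k₀ x = 0 := fun x => by
    rw [pr_symm hP]; exact hperpP x
  have hk₀U : k₀ ∉ U := by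
    intro h
    exact hQk0 (by rw [← hgk0]; exact h)
  have hk₀span : k₀ ∉ Submodule.span ℂ (Set.range w) := by
    intro h
    apply hk₀U
    have hle : Submodule.span ℂ (Set.range w) ≤ U := by
      rw [Submodule.span_le]
      rintro x ⟨i, rfl⟩
      exact hwU i
    exact hle h
  -- restricted matrices
  set P' : Matrix (Fin d') (Fin d') ℂ := Matrix.of (fun i j => pr P (w i) (w j)) with hP'def
  set Q' : Matrix (Fin d') (Fin d') ℂ := Matrix.of (fun i j => pr Q (w i) (w j)) with hQ'def
  have hP'sym : P'ᵀ = P' := by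
    ext i j
    simp only [Matrix.transpose_apply, hP'def, Matrix.of_apply]
    exact pr_symm hP _ _
  have hQ'sym : Q'ᵀ = Q' := by
    ext i j
    simp only [Matrix.transpose_apply, hQ'def, Matrix.of_apply]
    exact pr_symm hQ _ _
  -- no good vector for the restriction
  have hgood' : ¬ Good P' Q' := by
    rintro ⟨c, hc, hc1, hc2, a, b, hab, hfun⟩
    apply hgood
    set u := ∑ i, c i • w i with hudef
    have hu0 : u ≠ 0 := by
      intro h
      apply hc
      have := Fintype.linearIndependent_iff.mp hw c h
      funext i; exact this i
    have hiso1 : pr P u u = 0 := by rw [hudef, pr_comb]; exact hc1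
    have hiso2 : pr Q u u = 0 := by rw [hudef, pr_comb]; exact hc2
    refine ⟨u, hu0, hiso1, hiso2, a, b, hab, ?_⟩
    -- show the ambient functional combination vanishes
    set z := a • P.mulVec u + b • Q.mulVec u with hzdef
    have hzw : ∀ i, z ⬝ᵥ w i = 0 := by
      intro i
      have h1 : (P.mulVec u) ⬝ᵥ w i = (P'.mulVec c) i := by
        rw [dotProduct_comm]
        show pr P (w i) u = _
        rw [hudef, pr_sum_right]
        simp only [Matrix.mulVec, dotProduct, hP'def, Matrix.of_apply]
        exact Finset.sum_congr rfl fun j _ => by ring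
      have h2 : (Q.mulVec u) ⬝ᵥ w i = (Q'.mulVec c) i := by
        rw [dotProduct_comm]
        show pr Q (w i) u = _
        rw [hudef, pr_sum_right]
        simp only [Matrix.mulVec, dotProduct, hQ'def, Matrix.of_apply]
        exact Finset.sum_congr rfl fun j _ => by ring
      rw [hzdef, add_dotProduct, smul_dotProduct, smul_dotProduct,
        h1, h2]
      have := congrFun hfun i
      simpa using this
    have hzk₀ : z ⬝ᵥ k₀ = 0 := by
      have h1 : (P.mulVec u) ⬝ᵥ k₀ = 0 := by
        rw [dotProduct_comm]
        show pr P k₀ u = 0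
        exact hperpP' u
      have h2 : (Q.mulVec u) ⬝ᵥ k₀ = 0 := by
        rw [dotProduct_comm]
        show pr Q k₀ u = 0
        rw [hudef, pr_sum_right]
        refine Finset.sum_eq_zero fun i _ => ?_
        rw [hperpQ' _ (hwU i), mul_zero]
      rw [hzdef, add_dotProduct, smul_dotProduct, smul_dotProduct,
        h1, h2]
      simp
    have hfull : LinearIndependent ℂ (Fin.cons k₀ w : Fin (d'+1) → (Fin (d'+1) → ℂ)) :=
      linearIndependent_fin_cons.mpr ⟨hw, hk₀span⟩
    refine eq_zero_of_dot_family z _ hfull ?_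
    intro i
    refine Fin.cases ?_ ?_ i
    · rw [Fin.cons_zero]; exact hzk₀
    · intro i'; rw [Fin.cons_succ]; exact hzw i'
  -- recurse
  obtain ⟨k'', hk''ind, hk''off, hk''diag⟩ := IH P' Q' hP'sym hQ'sym hgood'
  set zf : Fin d' → (Fin (d'+1) → ℂ) := fun i => ∑ j, k'' i j • w j with hzfdef
  have hzfU : ∀ i, zf i ∈ U := by
    intro i
    exact Submodule.sum_mem _ fun j _ => Submodule.smul_mem _ _ (hwU j)
  have hzfind : LinearIndependent ℂ zf := lin_indep_comb hw hk''ind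
  refine ⟨Fin.cons k₀ zf, ?_, ?_, ?_⟩
  · refine linearIndependent_fin_cons.mpr ⟨hzfind, ?_⟩
    intro h
    apply hk₀U
    have hle : Submodule.span ℂ (Set.range zf) ≤ U := by
      rw [Submodule.span_le]
      rintro x ⟨i, rfl⟩
      exact hzfU i
    exact hle h
  · intro i j hij
    rcases Fin.eq_zero_or_eq_succ i with rfl | ⟨i', rfl⟩ <;>
      rcases Fin.eq_zero_or_eq_succ j with rfl | ⟨j', rfl⟩
    · exact absurd rfl hij
    · rw [Fin.cons_zero, Fin.cons_succ]
      constructor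
      · exact hperpP' _
      · show pr Q k₀ (zf j') = 0
        rw [hzfdef]
        show pr Q k₀ (∑ l, k'' j' l • w l) = 0
        rw [pr_sum_right]
        exact Finset.sum_eq_zero fun l _ => by rw [hperpQ' _ (hwU l), mul_zero]
    · rw [Fin.cons_succ, Fin.cons_zero]
      exact ⟨hperpP _, hperpQ _ (hzfU i')⟩
    · rw [Fin.cons_succ, Fin.cons_succ]
      have hij' : i' ≠ j' := fun h => hij (by rw [h])
      have h1 : pr P (zf i') (zf j') = pr P' (k'' i') (k'' j') := by
        rw [hzfdef]; exact pr_comb _ _ _ _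
      have h2 : pr Q (zf i') (zf j') = pr Q' (k'' i') (k'' j') := by
        rw [hzfdef]; exact pr_comb _ _ _ _
      rw [h1, h2]
      exact hk''off i' j' hij'
  · intro i
    refine Fin.cases ?_ ?_ i
    · rw [Fin.cons_zero]
      exact Or.inr hQk0
    · intro i'
      rw [Fin.cons_succ]
      have h1 : pr P (zf i') (zf i') = pr P' (k'' i') (k'' i') := by
        rw [hzfdef]; exact pr_comb _ _ _ _
      have h2 : pr Q (zf i') (zf i') = pr Q' (k'' i') (k'' i') := by
        rw [hzfdef]; exact pr_comb _ _ _ _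
      rw [h1, h2]
      exact hk''diag i'

end TwoQuadrics
end

noncomputable section
namespace TwoQuadrics
open Finset Module

variable {d e m : ℕ}

lemma pr_add_left (C : Matrix (Fin d) (Fin d) ℂ) (x y z : Fin d → ℂ) :
    pr C (x + y) z = pr C x z + pr C y z := add_dotProduct x y _

lemma pr_smul_left (C : Matrix (Fin d) (Fin d) ℂ) (s : ℂ) (x z : Fin d → ℂ) :
    pr C (s • x) z = s * pr C x z := by
  rw [pr, smul_dotProduct]; rfl

lemma pr_add_right (C : Matrix (Fin d) (Fin d) ℂ) (x y z : Fin d → ℂ) :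
    pr C x (y + z) = pr C x y + pr C x z := by
  rw [pr, Matrix.mulVec_add, dotProduct_add]

lemma pr_smul_right (C : Matrix (Fin d) (Fin d) ℂ) (s : ℂ) (x z : Fin d → ℂ) :
    pr C x (s • z) = s * pr C x z := by
  rw [pr, Matrix.mulVec_smul, dotProduct_smul]; rfl

lemma bad_diag : ∀ (d : ℕ) (A B : Matrix (Fin d) (Fin d) ℂ), Aᵀ = A → Bᵀ = B →
    ¬ Good A B → DiagStmt d A B := by
  intro d
  induction d using Nat.strong_induction_on with
  | _ d IH =>
    intro A B hA hB hgood
    rcases Nat.eq_zero_or_pos d with rfl | hd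
    · exact ⟨fun i => i.elim0, linearIndependent_empty_type, fun i => i.elim0, fun i => i.elim0⟩
    obtain ⟨d', rfl⟩ : ∃ d', d = d'+1 := ⟨d-1, by omega⟩
    have IH' := IH d' (by omega)
    rcases exists_degenerate (by omega) A B with ⟨v, hv, hker⟩ | ⟨σ, v, hv, hker⟩
    · -- B is degenerate: use the pair (B, A)
      have hswap : ¬ Good B A := fun h => hgood (good_swap h)
      obtain ⟨k, h1, h2, h3⟩ := bad_diag_core IH' B A hB hA hswap v hv hker
      exact ⟨k, h1, fun i j hij => ⟨(h2 i j hij).2, (h2 i j hij).1⟩, fun i => (h3 i).symm⟩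
    · -- A + σ • B is degenerate
      have hsymm' : (A + σ • B)ᵀ = A + σ • B := by
        rw [Matrix.transpose_add, Matrix.transpose_smul, hA, hB]
      have hg : ¬ Good (A + σ • B) B := fun h => hgood (good_shear σ h)
      obtain ⟨k, hk1, hk2, hk3⟩ := bad_diag_core IH' (A + σ • B) B hsymm' hB hg v hv hker
      refine ⟨k, hk1, ?_, ?_⟩
      · intro i j hij
        obtain ⟨hPp, hQp⟩ := hk2 i j hij
        rw [pr_add_smul, hQp, mul_zero, add_zero] at hPp
        exact ⟨hPp, hQp⟩
      · intro i
        rcases hk3 i with h | h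
        · by_cases hBnz : pr B (k i) (k i) = 0
          · left
            intro hA0
            exact h (by rw [pr_add_smul, hA0, hBnz, mul_zero, add_zero])
          · exact Or.inr hBnz
        · exact Or.inr h

/-- existence of an isotropic family of dimension (d-1)/2 -/
def Sol (d m : ℕ) (A B : Matrix (Fin d) (Fin d) ℂ) : Prop :=
  ∃ c : Fin m → (Fin d → ℂ), LinearIndependent ℂ c ∧
    ∀ j l, pr A (c j) (c l) = 0 ∧ pr B (c j) (c l) = 0

lemma sol_of_bad {d : ℕ} (A B : Matrix (Fin d) (Fin d) ℂ) (hA : Aᵀ = A) (hB : Bᵀ = B)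
    (hgood : ¬ Good A B) : Sol d ((d-1)/2) A B := by
  obtain ⟨k, hkind, hkoff, hkdiag⟩ := bad_diag d A B hA hB hgood
  set a : Fin d → ℂ := fun i => pr A (k i) (k i) with hadef
  set b : Fin d → ℂ := fun i => pr B (k i) (k i) with hbdef
  -- choose a shear making all A-diagonal entries nonzero
  obtain ⟨c, hc⟩ : ∃ c : ℂ, ∀ i, a i + c * b i ≠ 0 := by
    obtain ⟨c, hc⟩ := Infinite.exists_notMem_finset
      (Finset.univ.image (fun i => -(a i) / b i))
    refine ⟨c, fun i h0 => ?_⟩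
    by_cases hbi : b i = 0
    · rw [hbi, mul_zero, add_zero] at h0
      rcases hkdiag i with h | h
      · exact h h0
      · exact h hbi
    · apply hc
      rw [Finset.mem_image]
      refine ⟨i, Finset.mem_univ i, ?_⟩
      rw [div_eq_iff hbi]
      linear_combination -h0
  set A' := A + c • B with hA'def
  have hA'sym : A'ᵀ = A' := by rw [hA'def, Matrix.transpose_add, Matrix.transpose_smul, hA, hB]
  set a' : Fin d → ℂ := fun i => a i + c * b i with ha'def
  have ha' : ∀ i, a' i ≠ 0 := hc
  have hA'diag : ∀ i j, pr A' (k i) (k j) = if i = j then a' i else 0 := by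
    intro i j
    rw [hA'def, pr_add_smul]
    by_cases hij : i = j
    · subst hij; rw [if_pos rfl]
    · rw [if_neg hij, (hkoff i j hij).1, (hkoff i j hij).2, mul_zero, add_zero]
  have hBdiag : ∀ i j, pr B (k i) (k j) = if i = j then b i else 0 := by
    intro i j
    by_cases hij : i = j
    · subst hij; rw [if_pos rfl]
    · rw [if_neg hij]; exact (hkoff i j hij).2
  set μ : Fin d → ℂ := fun i => b i / a' i with hμdef
  have hbμ : ∀ i, b i = μ i * a' i := by
    intro i
    show b i = b i / a' i * a' i
    exact (div_mul_cancel₀ _ (ha' i)).symm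
  -- injectivity of μ
  have hμinj : Function.Injective μ := by
    intro i j hij
    by_contra hne
    -- build a good vector
    obtain ⟨s, hs⟩ := exists_sqrt (-(a' j) / a' i)
    have hsne : s ≠ 0 := by
      intro h0; rw [h0, mul_zero] at hs
      have := div_ne_zero (neg_ne_zero.mpr (ha' j)) (ha' i)
      exact this hs.symm
    have hsq : s * s * a' i + a' j = 0 := by
      rw [hs, div_mul_cancel₀ _ (ha' i), neg_add_cancel]
    set v := s • k i + k j with hvdef
    have hvne : v ≠ 0 := by
      intro h0
      have hpair : LinearIndependent ℂ ![k i, k j] := by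
        have hinj : Function.Injective (fun t : Fin 2 => if t = 0 then i else j) := by
          intro t₁ t₂ h12
          fin_cases t₁ <;> fin_cases t₂
          · rfl
          · exfalso; simp only [reduceIte] at h12; exact hne h12
          · exfalso; simp only [reduceIte] at h12; exact hne h12.symm
          · rfl
        have hcomp := hkind.comp _ hinj
        have heqf : (k ∘ fun t : Fin 2 => if t = 0 then i else j) = ![k i, k j] := by
          funext t
          fin_cases t
          · simp
          · simp
        rw [heqf] at hcomp
        exact hcomp
      rw [LinearIndependent.pair_iff] at hpair
      have := hpair s 1 (by rw [one_smul, ← hvdef]; exact h0)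
      exact one_ne_zero this.2
    have hisoA' : pr A' v v = 0 := by
      rw [hvdef, pr_add_left, pr_add_right, pr_add_right, pr_smul_left, pr_smul_right,
        pr_smul_left, pr_smul_right, hA'diag, hA'diag, hA'diag, hA'diag]
      rw [if_pos rfl, if_pos rfl, if_neg hne, if_neg (fun h => hne h.symm)]
      linear_combination hsq
    have hisoB : pr B v v = 0 := by
      rw [hvdef, pr_add_left, pr_add_right, pr_add_right, pr_smul_left, pr_smul_right,
        pr_smul_left, pr_smul_right, hBdiag, hBdiag, hBdiag, hBdiag]
      rw [if_pos rfl, if_pos rfl, if_neg hne, if_neg (fun h => hne h.symm)]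
      rw [hbμ i, hbμ j, ← hij]
      linear_combination (μ i) * hsq
    have hfun : μ i • A'.mulVec v + (-1 : ℂ) • B.mulVec v = 0 := by
      apply eq_zero_of_dot_family _ k hkind
      intro l
      rw [add_dotProduct, smul_dotProduct, smul_dotProduct]
      have hAv : A'.mulVec v ⬝ᵥ k l = pr A' (k l) v := dotProduct_comm _ _
      have hBv : B.mulVec v ⬝ᵥ k l = pr B (k l) v := dotProduct_comm _ _
      rw [hAv, hBv, hvdef, pr_add_right, pr_smul_right, pr_add_right, pr_smul_right,
        hA'diag, hA'diag, hBdiag, hBdiag]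
      by_cases hli : l = i
      · subst hli
        rw [if_pos rfl, if_pos rfl, if_neg hne, if_neg hne]
        rw [hbμ l]
        simp only [smul_eq_mul]
        ring
      · by_cases hlj : l = j
        · subst hlj
          rw [if_neg (fun h => hli h), if_neg (fun h => hli h), if_pos rfl, if_pos rfl]
          rw [hbμ l, hij]
          simp only [smul_eq_mul]
          ring
        · rw [if_neg hli, if_neg hli, if_neg hlj, if_neg hlj]
          simp
    apply hgood
    apply good_shear c
    exact ⟨v, hvne, hisoA', hisoB, μ i, -1, Or.inr (by norm_num), hfun⟩
  obtain ⟨cc, hccind, hcc⟩ := diag_sol A' B k hkind a' b μ ha' hμinj hbμ hA'diag hBdiag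
  refine ⟨cc, hccind, fun j l => ?_⟩
  obtain ⟨h1, h2⟩ := hcc j l
  constructor
  · have := pr_add_smul A B c (cc j) (cc l)
    rw [← hA'def] at this
    rw [h1, h2, mul_zero, add_zero] at this
    exact this.symm
  · exact h2

end TwoQuadrics
end

noncomputable section
namespace TwoQuadrics
open Finset Module

theorem sol_main : ∀ (d : ℕ) (A B : Matrix (Fin d) (Fin d) ℂ), Aᵀ = A → Bᵀ = B →
    Sol d ((d-1)/2) A B := by
  intro d
  induction d using Nat.strong_induction_on with
  | _ d IH =>
    intro A B hA hB
    by_cases hgood : Good A B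
    swap
    · exact sol_of_bad A B hA hB hgood
    rcases Nat.eq_zero_or_pos ((d-1)/2) with hm0 | hm0
    · rw [hm0]
      exact ⟨fun i => i.elim0, linearIndependent_empty_type, fun j => j.elim0⟩
    obtain ⟨v, hv, hva, hvb, aa, bb, hab, hfun⟩ := hgood
    -- a single functional controlling both polar forms of v
    obtain ⟨g, hgkey, hgv⟩ : ∃ g : Fin d → ℂ,
        (∀ x, g ⬝ᵥ x = 0 → (A.mulVec v) ⬝ᵥ x = 0 ∧ (B.mulVec v) ⬝ᵥ x = 0) ∧ g ⬝ᵥ v = 0 := by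
      by_cases ha0 : aa = 0
      · have hbb : bb ≠ 0 := by rcases hab with h | h; exact absurd ha0 h; exact h
        have hBv : B.mulVec v = 0 := by
          have h := hfun
          rw [ha0, zero_smul, zero_add] at h
          exact (smul_eq_zero.mp h).resolve_left hbb
        refine ⟨A.mulVec v, fun x hx => ⟨hx, by rw [hBv, zero_dotProduct]⟩, ?_⟩
        rw [dotProduct_comm]
        exact hva
      · have hAv : A.mulVec v = (-bb/aa) • B.mulVec v := by
          have h := hfun
          have : aa • A.mulVec v = -(bb • B.mulVec v) := by
            rw [← add_eq_zero_iff_eq_neg]; exact h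
          have h2 : A.mulVec v = aa⁻¹ • (aa • A.mulVec v) := by
            rw [smul_smul, inv_mul_cancel₀ ha0, one_smul]
          rw [h2, this, smul_neg, smul_smul, ← neg_smul]
          congr 1
          field_simp
        refine ⟨B.mulVec v, fun x hx => ⟨by rw [hAv, smul_dotProduct, hx, smul_zero], hx⟩, ?_⟩
        rw [dotProduct_comm]
        exact hvb
    obtain ⟨i₀, hi₀⟩ : ∃ i₀, v i₀ ≠ 0 := by
      by_contra hh; push_neg at hh; exact hv (funext hh)
    obtain ⟨U₀, hU₀mem, hvU₀, hrk1, hrk2⟩ : ∃ U₀ : Submodule ℂ (Fin d → ℂ),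
        (∀ x, x ∈ U₀ → g ⬝ᵥ x = 0 ∧ x i₀ = 0) ∧ v ∉ U₀ ∧
          d - 2 ≤ finrank ℂ U₀ ∧ finrank ℂ U₀ < d := by
      set f := (dotL g).prod (dotL (Pi.single i₀ 1)) with hfdef
      have hU₀mem : ∀ x, x ∈ LinearMap.ker f → g ⬝ᵥ x = 0 ∧ x i₀ = 0 := by
        intro x hx
        have h := hx
        rw [LinearMap.mem_ker, hfdef, LinearMap.prod_apply] at h
        have h1 := congrArg Prod.fst h
        have h2 := congrArg Prod.snd h
        refine ⟨h1, ?_⟩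
        have hh : dotL (Pi.single i₀ 1) x = x i₀ := by
          show Pi.single i₀ 1 ⬝ᵥ x = x i₀
          rw [single_dotProduct, one_mul]
        rw [← hh]
        exact h2
      have hvU₀ : v ∉ LinearMap.ker f := fun h => hi₀ (hU₀mem v h).2
      refine ⟨LinearMap.ker f, hU₀mem, hvU₀, ?_, ?_⟩
      · have h := LinearMap.finrank_range_add_finrank_ker f
        rw [Module.finrank_fin_fun] at h
        have : finrank ℂ (LinearMap.range f) ≤ 2 := by
          have h2 := Submodule.finrank_le (LinearMap.range f)
          rw [Module.finrank_prod, Module.finrank_self] at h2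
          omega
        omega
      · by_contra hh
        push_neg at hh
        have hle : finrank ℂ (LinearMap.ker f) ≤ d := by
          have := Submodule.finrank_le (LinearMap.ker f)
          rwa [Module.finrank_fin_fun] at this
        have heq : finrank ℂ (LinearMap.ker f) = d := by omega
        have : LinearMap.ker f = ⊤ :=
          Submodule.eq_top_of_finrank_eq (by rw [heq, Module.finrank_fin_fun])
        exact hvU₀ (by rw [this]; trivial)
    obtain ⟨w, hw, hwU, hwspan⟩ := subspace_family U₀
    set A' : Matrix (Fin (finrank ℂ U₀)) (Fin (finrank ℂ U₀)) ℂ :=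
      Matrix.of (fun i j => pr A (w i) (w j)) with hA'def
    set B' : Matrix (Fin (finrank ℂ U₀)) (Fin (finrank ℂ U₀)) ℂ :=
      Matrix.of (fun i j => pr B (w i) (w j)) with hB'def
    have hA'sym : A'ᵀ = A' := by
      ext i j; simp only [Matrix.transpose_apply, hA'def, Matrix.of_apply]; exact pr_symm hA _ _
    have hB'sym : B'ᵀ = B' := by
      ext i j; simp only [Matrix.transpose_apply, hB'def, Matrix.of_apply]; exact pr_symm hB _ _
    obtain ⟨cc, hccind, hccpr⟩ := IH (finrank ℂ U₀) hrk2 A' B' hA'sym hB'sym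
    -- truncate to m-1 vectors
    obtain ⟨m₀, hm⟩ : ∃ m₀, (d-1)/2 = m₀ + 1 := ⟨(d-1)/2 - 1, by omega⟩
    have hm₀le : m₀ ≤ (finrank ℂ U₀ - 1)/2 := by omega
    set cmap : Fin m₀ → Fin ((finrank ℂ U₀ - 1)/2) := Fin.castLE hm₀le with hcmapdef
    have hccind' : LinearIndependent ℂ (cc ∘ cmap) :=
      hccind.comp cmap (Fin.castLE_injective _)
    set z : Fin m₀ → (Fin d → ℂ) := fun j => ∑ i, cc (cmap j) i • w i with hzdef
    have hzU₀ : ∀ j, z j ∈ U₀ := fun j =>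
      Submodule.sum_mem _ fun i _ => Submodule.smul_mem _ _ (hwU i)
    have hzind : LinearIndependent ℂ z := lin_indep_comb hw hccind'
    have hvnotspan : v ∉ Submodule.span ℂ (Set.range z) := by
      intro h
      apply hvU₀
      have hle : Submodule.span ℂ (Set.range z) ≤ U₀ := by
        rw [Submodule.span_le]; rintro x ⟨i, rfl⟩; exact hzU₀ i
      exact hle h
    rw [hm]
    refine ⟨Fin.cons v z, linearIndependent_fin_cons.mpr ⟨hzind, hvnotspan⟩, ?_⟩
    have hperpA : ∀ x ∈ U₀, pr A v x = 0 ∧ pr B v x = 0 := by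
      intro x hx
      have h := hgkey x (hU₀mem x hx).1
      constructor
      · rw [pr_symm hA]
        show x ⬝ᵥ A.mulVec v = 0
        rw [dotProduct_comm]
        exact h.1
      · rw [pr_symm hB]
        show x ⬝ᵥ B.mulVec v = 0
        rw [dotProduct_comm]
        exact h.2
    intro j l
    rcases Fin.eq_zero_or_eq_succ j with rfl | ⟨j', rfl⟩ <;>
      rcases Fin.eq_zero_or_eq_succ l with rfl | ⟨l', rfl⟩
    · rw [Fin.cons_zero]; exact ⟨hva, hvb⟩
    · rw [Fin.cons_zero, Fin.cons_succ]
      exact hperpA _ (hzU₀ l')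
    · rw [Fin.cons_succ, Fin.cons_zero]
      obtain ⟨h1, h2⟩ := hperpA _ (hzU₀ j')
      exact ⟨by rw [pr_symm hA]; exact h1, by rw [pr_symm hB]; exact h2⟩
    · rw [Fin.cons_succ, Fin.cons_succ]
      have h1 : pr A (z j') (z l') = pr A' (cc (cmap j')) (cc (cmap l')) := by
        rw [hzdef]; exact pr_comb _ _ _ _
      have h2 : pr B (z j') (z l') = pr B' (cc (cmap j')) (cc (cmap l')) := by
        rw [hzdef]; exact pr_comb _ _ _ _
      rw [h1, h2]
      exact hccpr _ _

end TwoQuadrics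
end

noncomputable section
namespace TwoQuadrics
open Finset Module

variable {N : ℕ}

lemma pi_sum_single (x : Fin N → ℂ) : x = ∑ i, x i • (Pi.single i 1 : Fin N → ℂ) := by
  funext j
  rw [Finset.sum_apply]
  rw [Finset.sum_eq_single j]
  · simp
  · intro b _ hbj
    simp [Pi.single_apply, Ne.symm hbj]
  · intro hj; exact absurd (Finset.mem_univ j) hj

lemma bil_sum_sum (B : (Fin N → ℂ) →ₗ[ℂ] (Fin N → ℂ) →ₗ[ℂ] ℂ) {ι κ : Type*}
    [Fintype ι] [Fintype κ] (f : ι → ℂ) (u : ι → (Fin N → ℂ)) (g : κ → ℂ)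
    (w : κ → (Fin N → ℂ)) :
    B (∑ i, f i • u i) (∑ j, g j • w j) = ∑ i, ∑ j, f i * g j * B (u i) (w j) := by
  calc B (∑ i, f i • u i) (∑ j, g j • w j)
      = ∑ j, g j * B (∑ i, f i • u i) (w j) := by
        rw [map_sum]
        refine Finset.sum_congr rfl fun j _ => ?_
        rw [_root_.map_smul, smul_eq_mul]
    _ = ∑ j, ∑ i, g j * (f i * B (u i) (w j)) := by
        refine Finset.sum_congr rfl fun j _ => ?_
        rw [map_sum, LinearMap.sum_apply, Finset.mul_sum]
        refine Finset.sum_congr rfl fun i _ => ?_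
        rw [_root_.map_smul, LinearMap.smul_apply, smul_eq_mul]
    _ = ∑ i, ∑ j, f i * g j * B (u i) (w j) := by
        rw [Finset.sum_comm]
        exact Finset.sum_congr rfl fun i _ => Finset.sum_congr rfl fun j _ => by ring

lemma bil_eq_pr (B : (Fin N → ℂ) →ₗ[ℂ] (Fin N → ℂ) →ₗ[ℂ] ℂ) (x y : Fin N → ℂ) :
    B x y = pr (Matrix.of fun i j => B (Pi.single i 1) (Pi.single j 1)) x y := by
  conv_lhs => rw [pi_sum_single x, pi_sum_single y]
  rw [bil_sum_sum, pr_eq_sum]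
  refine Finset.sum_congr rfl fun i _ => Finset.sum_congr rfl fun j _ => ?_
  rw [Matrix.of_apply]
  ring

lemma bil_comb (B : (Fin N → ℂ) →ₗ[ℂ] (Fin N → ℂ) →ₗ[ℂ] ℂ) {e : ℕ}
    (w : Fin e → (Fin N → ℂ)) (c c' : Fin e → ℂ) :
    B (∑ i, c i • w i) (∑ i, c' i • w i)
      = pr (Matrix.of fun i j => B (w i) (w j)) c c' := by
  rw [bil_sum_sum, pr_eq_sum]
  refine Finset.sum_congr rfl fun i _ => Finset.sum_congr rfl fun j _ => ?_
  rw [Matrix.of_apply]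
  ring

lemma span_iso {V : Type*} [AddCommGroup V] [Module ℂ V] (B : V →ₗ[ℂ] V →ₗ[ℂ] ℂ)
    {ι : Type*} (f : ι → V) (h : ∀ i j, B (f i) (f j) = 0) :
    ∀ x ∈ Submodule.span ℂ (Set.range f), ∀ y ∈ Submodule.span ℂ (Set.range f), B x y = 0 := by
  intro x hx
  induction hx using Submodule.span_induction with
  | mem x hxm =>
    intro y hy
    induction hy using Submodule.span_induction with
    | mem y hym =>
      obtain ⟨i, rfl⟩ := hxm
      obtain ⟨j, rfl⟩ := hym
      exact h i j
    | zero => simp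
    | add y₁ y₂ _ _ h1 h2 => rw [map_add, h1, h2, add_zero]
    | smul c y _ hy => rw [_root_.map_smul, hy, smul_zero]
  | zero => intro y hy; simp
  | add x₁ x₂ _ _ h1 h2 => intro y hy; rw [map_add, LinearMap.add_apply, h1 y hy, h2 y hy, add_zero]
  | smul c x _ hx => intro y hy; rw [_root_.map_smul, LinearMap.smul_apply, hx y hy, smul_zero]

end TwoQuadrics
end

open TwoQuadrics Module in
/-- A smooth `(2n+1)`-dimensional complete intersection of two quadrics `X ⊂ P^{2n+3}` is swept
out by `n`-dimensional linear subspaces: through every point of `X` there is a `P^n` contained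
in `X`.  Here `X` is the common zero locus of two symmetric bilinear forms on `ℂ^{2n+4}`,
assumed smooth (transverse), and a `P^n ⊆ X` through `x` corresponds to an `(n+1)`-dimensional
linear subspace `W ⊆ ℂ^{2n+4}` with `x ∈ W` on which both forms vanish. -/
theorem intersection_two_quadrics_swept_by_linear_spaces (n : ℕ)
    (B₁ B₂ : (Fin (2 * n + 4) → ℂ) →ₗ[ℂ] (Fin (2 * n + 4) → ℂ) →ₗ[ℂ] ℂ)
    (hsymm₁ : ∀ x y, B₁ x y = B₁ y x) (hsymm₂ : ∀ x y, B₂ x y = B₂ y x)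
    (hsmooth : ∀ x : Fin (2 * n + 4) → ℂ, x ≠ 0 → B₁ x x = 0 → B₂ x x = 0 →
        ∀ a b : ℂ, (∀ v, a * B₁ x v + b * B₂ x v = 0) → a = 0 ∧ b = 0) :
    ∀ x : Fin (2 * n + 4) → ℂ, B₁ x x = 0 → B₂ x x = 0 →
      ∃ W : Submodule ℂ (Fin (2 * n + 4) → ℂ), Module.finrank ℂ W = n + 1 ∧ x ∈ W ∧
        ∀ w ∈ W, B₁ w w = 0 ∧ B₂ w w = 0 := by
  intro x hx1 hx2
  by_cases hx0 : x = 0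
  · -- use the full-space solution
    set M₁ : Matrix (Fin (2*n+4)) (Fin (2*n+4)) ℂ :=
      Matrix.of fun i j => B₁ (Pi.single i 1) (Pi.single j 1) with hM₁def
    set M₂ : Matrix (Fin (2*n+4)) (Fin (2*n+4)) ℂ :=
      Matrix.of fun i j => B₂ (Pi.single i 1) (Pi.single j 1) with hM₂def
    have hM₁s : M₁ᵀ = M₁ := by
      ext i j; simp only [Matrix.transpose_apply, hM₁def, Matrix.of_apply]; exact hsymm₁ _ _
    have hM₂s : M₂ᵀ = M₂ := by
      ext i j; simp only [Matrix.transpose_apply, hM₂def, Matrix.of_apply]; exact hsymm₂ _ _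
    have hs := sol_main (2*n+4) M₁ M₂ hM₁s hM₂s
    have hdm : (2*n+4-1)/2 = n+1 := by omega
    rw [hdm] at hs
    obtain ⟨c, hcind, hcpr⟩ := hs
    refine ⟨Submodule.span ℂ (Set.range c), ?_, ?_, ?_⟩
    · rw [finrank_span_eq_card hcind, Fintype.card_fin]
    · rw [hx0]; exact Submodule.zero_mem _
    · intro w hw
      have h1 : ∀ i j, B₁ (c i) (c j) = 0 := by
        intro i j; rw [bil_eq_pr B₁, ← hM₁def]; exact (hcpr i j).1
      have h2 : ∀ i j, B₂ (c i) (c j) = 0 := by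
        intro i j; rw [bil_eq_pr B₂, ← hM₂def]; exact (hcpr i j).2
      exact ⟨span_iso B₁ c h1 w hw w hw, span_iso B₂ c h2 w hw w hw⟩
  · -- x ≠ 0
    obtain ⟨i₀, hi₀⟩ : ∃ i₀, x i₀ ≠ 0 := by
      by_contra hh; push_neg at hh; exact hx0 (funext hh)
    obtain ⟨U₀, hU₀mem, hxU₀, hrk1⟩ : ∃ U₀ : Submodule ℂ (Fin (2*n+4) → ℂ),
        (∀ u, u ∈ U₀ → B₁ x u = 0 ∧ B₂ x u = 0 ∧ u i₀ = 0) ∧ x ∉ U₀ ∧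
          2*n+1 ≤ finrank ℂ U₀ := by
      set f := (B₁ x).prod ((B₂ x).prod (dotL (Pi.single i₀ 1))) with hfdef
      have hmem : ∀ u, u ∈ LinearMap.ker f → B₁ x u = 0 ∧ B₂ x u = 0 ∧ u i₀ = 0 := by
        intro u hu
        rw [LinearMap.mem_ker, hfdef, LinearMap.prod_apply] at hu
        have h1 := congrArg Prod.fst hu
        have h2 := congrArg (fun p => p.2.1) hu
        have h3 := congrArg (fun p => p.2.2) hu
        refine ⟨h1, h2, ?_⟩
        have hh : dotL (Pi.single i₀ 1) u = u i₀ := by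
          show Pi.single i₀ 1 ⬝ᵥ u = u i₀
          rw [single_dotProduct, one_mul]
        rw [← hh]
        exact h3
      refine ⟨LinearMap.ker f, hmem, ?_, ?_⟩
      · intro h
        exact hi₀ (hmem x h).2.2
      · have h := LinearMap.finrank_range_add_finrank_ker f
        rw [Module.finrank_fin_fun] at h
        have : finrank ℂ (LinearMap.range f) ≤ 3 := by
          have h2 := Submodule.finrank_le (LinearMap.range f)
          rw [Module.finrank_prod, Module.finrank_prod, Module.finrank_self] at h2
          omega
        omega
    obtain ⟨w, hw, hwU, hwspan⟩ := subspace_family U₀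
    set A' : Matrix (Fin (finrank ℂ U₀)) (Fin (finrank ℂ U₀)) ℂ :=
      Matrix.of (fun i j => B₁ (w i) (w j)) with hA'def
    set B' : Matrix (Fin (finrank ℂ U₀)) (Fin (finrank ℂ U₀)) ℂ :=
      Matrix.of (fun i j => B₂ (w i) (w j)) with hB'def
    have hA'sym : A'ᵀ = A' := by
      ext i j; simp only [Matrix.transpose_apply, hA'def, Matrix.of_apply]; exact hsymm₁ _ _
    have hB'sym : B'ᵀ = B' := by
      ext i j; simp only [Matrix.transpose_apply, hB'def, Matrix.of_apply]; exact hsymm₂ _ _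
    obtain ⟨cc, hccind, hccpr⟩ := sol_main (finrank ℂ U₀) A' B' hA'sym hB'sym
    have hnle : n ≤ (finrank ℂ U₀ - 1)/2 := by omega
    set cmap : Fin n → Fin ((finrank ℂ U₀ - 1)/2) := Fin.castLE hnle with hcmapdef
    have hccind' : LinearIndependent ℂ (cc ∘ cmap) := hccind.comp cmap (Fin.castLE_injective _)
    set z : Fin n → (Fin (2*n+4) → ℂ) := fun j => ∑ i, cc (cmap j) i • w i with hzdef
    have hzU₀ : ∀ j, z j ∈ U₀ := fun j =>
      Submodule.sum_mem _ fun i _ => Submodule.smul_mem _ _ (hwU i)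
    have hzind : LinearIndependent ℂ z := lin_indep_comb hw hccind'
    have hxnotspan : x ∉ Submodule.span ℂ (Set.range z) := by
      intro h
      apply hxU₀
      have hle : Submodule.span ℂ (Set.range z) ≤ U₀ := by
        rw [Submodule.span_le]; rintro u ⟨i, rfl⟩; exact hzU₀ i
      exact hle h
    have hFind : LinearIndependent ℂ (Fin.cons x z : Fin (n+1) → (Fin (2*n+4) → ℂ)) :=
      linearIndependent_fin_cons.mpr ⟨hzind, hxnotspan⟩
    refine ⟨Submodule.span ℂ (Set.range (Fin.cons x z : Fin (n+1) → (Fin (2*n+4) → ℂ))),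
      ?_, ?_, ?_⟩
    · rw [finrank_span_eq_card hFind, Fintype.card_fin]
    · exact Submodule.subset_span ⟨0, by rw [Fin.cons_zero]⟩
    · have hpair : ∀ (Bf : (Fin (2*n+4) → ℂ) →ₗ[ℂ] (Fin (2*n+4) → ℂ) →ₗ[ℂ] ℂ),
          (∀ x y, Bf x y = Bf y x) → (Bf x x = 0) →
          (∀ u, u ∈ U₀ → Bf x u = 0) →
          (∀ i j, Bf (z i) (z j) = 0) →
          ∀ j l, Bf ((Fin.cons x z : Fin (n+1) → _) j) ((Fin.cons x z : Fin (n+1) → _) l) = 0 := by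
        intro Bf hsym hiso hperp hzz j l
        rcases Fin.eq_zero_or_eq_succ j with rfl | ⟨j', rfl⟩ <;>
          rcases Fin.eq_zero_or_eq_succ l with rfl | ⟨l', rfl⟩
        · rw [Fin.cons_zero]; exact hiso
        · rw [Fin.cons_zero, Fin.cons_succ]; exact hperp _ (hzU₀ l')
        · rw [Fin.cons_succ, Fin.cons_zero, hsym]; exact hperp _ (hzU₀ j')
        · rw [Fin.cons_succ, Fin.cons_succ]; exact hzz j' l'
      have hz1 : ∀ i j, B₁ (z i) (z j) = 0 := by
        intro i j
        rw [hzdef]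
        show B₁ (∑ i', cc (cmap i) i' • w i') (∑ i', cc (cmap j) i' • w i') = 0
        rw [bil_comb, ← hA'def]
        exact (hccpr _ _).1
      have hz2 : ∀ i j, B₂ (z i) (z j) = 0 := by
        intro i j
        rw [hzdef]
        show B₂ (∑ i', cc (cmap i) i' • w i') (∑ i', cc (cmap j) i' • w i') = 0
        rw [bil_comb, ← hB'def]
        exact (hccpr _ _).2
      have hperp1 : ∀ u, u ∈ U₀ → B₁ x u = 0 := fun u hu => (hU₀mem u hu).1
      have hperp2 : ∀ u, u ∈ U₀ → B₂ x u = 0 := fun u hu => (hU₀mem u hu).2.1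
      intro w' hw'
      exact ⟨span_iso B₁ _ (hpair B₁ hsymm₁ hx1 hperp1 hz1) w' hw' w' hw',
        span_iso B₂ _ (hpair B₂ hsymm₂ hx2 hperp2 hz2) w' hw' w' hw'⟩
end
end

section
/- The Schubert variety Ω(1,4) ⊂ G(1, P^4) of lines in P^4 meeting a fixed line admits a hyperplane section (in the Plücker embedding) isomorphic to the Segre threefold P^1 × P^2; consequently every smooth hyperplane section of the Grassmannian G(2, C^5) ⊂ P(∧²C^5) is swept out by copies of P^1 × P^2. -/
open MvPolynomial


noncomputable section

/-- A subset of `ι → ℂ` is an *algebraic cone* if it is the common zero locus of a set of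
homogeneous polynomials (the affine cone over a projective algebraic set). -/
def IsAlgCone (ι : Type) (S : Set (ι → ℂ)) : Prop :=
  ∃ T : Set (MvPolynomial ι ℂ), (∀ f ∈ T, ∃ d, f.IsHomogeneous d) ∧
    S = {x | ∀ f ∈ T, eval x f = 0}

/-- An algebraic cone is *irreducible* (as a projective set) if it contains a nonzero point and
cannot be written as the union of two strictly smaller algebraic cones. -/
def IsIrrCone (ι : Type) (S : Set (ι → ℂ)) : Prop :=
  (∃ x ∈ S, x ≠ 0) ∧
  ∀ S₁ S₂ : Set (ι → ℂ), IsAlgCone ι S₁ → IsAlgCone ι S₂ → S = S₁ ∪ S₂ → S = S₁ ∨ S = S₂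

/-- The projective dimension of (the projective set underlying) a cone `S`, as the Krull
dimension of the poset of irreducible algebraic cones contained in `S`. -/
noncomputable def coneDim (ι : Type) (S : Set (ι → ℂ)) : WithBot ℕ∞ :=
  Order.krullDim {T : Set (ι → ℂ) // IsAlgCone ι T ∧ IsIrrCone ι T ∧ T ⊆ S}

/-- The Zariski tangent space of the cone `S` at `x`: vectors annihilated by the differentials of
all polynomials vanishing on `S`. -/
noncomputable def coneTangent (ι : Type) [Fintype ι] (S : Set (ι → ℂ)) (x : ι → ℂ) :
    Submodule ℂ (ι → ℂ) where
  carrier := {v | ∀ f : MvPolynomial ι ℂ, (∀ y ∈ S, eval y f = 0) →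
      (∑ i, v i * eval x (pderiv i f)) = 0}
  zero_mem' := by intro f _; simp
  add_mem' := by
    intro a b ha hb f hf
    have h1 := ha f hf
    have h2 := hb f hf
    simp only [Pi.add_apply, add_mul, Finset.sum_add_distrib, h1, h2, add_zero]
  smul_mem' := by
    intro c a ha f hf
    have h1 := ha f hf
    simp only [Pi.smul_apply, smul_eq_mul, mul_assoc, ← Finset.mul_sum, h1, mul_zero]

/-- `x` is a smooth point of the cone `S` over a projective variety of (projective) dimension
`n` if the Zariski tangent space of the cone has dimension `n + 1`. -/
def IsSmoothAt (ι : Type) [Fintype ι] (S : Set (ι → ℂ)) (n : ℕ) (x : ι → ℂ) : Prop :=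
  Module.finrank ℂ (coneTangent ι S x) = n + 1

/-- The singular locus of (the cone over) a projective variety of dimension `n`. -/
def SingCone (ι : Type) [Fintype ι] (S : Set (ι → ℂ)) (n : ℕ) : Set (ι → ℂ) :=
  {x | x ∈ S ∧ x ≠ 0 ∧ ¬ IsSmoothAt ι S n x}

/-- `S` is the affine cone over a smooth irreducible projective variety of dimension `n`. -/
def IsSmoothProjVar (ι : Type) [Fintype ι] (S : Set (ι → ℂ)) (n : ℕ) : Prop :=
  IsAlgCone ι S ∧ IsIrrCone ι S ∧ coneDim ι S = ((n : ℕ∞) : WithBot ℕ∞) ∧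
    ∀ x ∈ S, x ≠ 0 → IsSmoothAt ι S n x

/-- `S` is (the cone over) a linear subspace of projective dimension `k`. -/
def IsLinearCone (ι : Type) (S : Set (ι → ℂ)) (k : ℕ) : Prop :=
  ∃ W : Submodule ℂ (ι → ℂ), Module.finrank ℂ W = k + 1 ∧ S = (W : Set (ι → ℂ))

end

noncomputable section

/-- The Plücker point of the pair of vectors `a, b`. -/
def plueck (ι : Type) (a b : ι → ℂ) : ι × ι → ℂ := fun p => a p.1 * b p.2 - a p.2 * b p.1

/-- The affine cone over the Segre threefold `P^1 × P^2 ⊂ P^5`: decomposable tensors in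
`ℂ^2 ⊗ ℂ^3`. -/
def segreCone23 : Set (Fin 2 × Fin 3 → ℂ) :=
  {x | ∃ (a : Fin 2 → ℂ) (b : Fin 3 → ℂ), x = fun p => a p.1 * b p.2}

/-- The affine cone (in Plücker coordinates) over the Grassmannian `G(2, ℂ^5) = G(1, P^4)`. -/
def grassCone25 : Set (Fin 5 × Fin 5 → ℂ) :=
  {ω | ∃ a b : Fin 5 → ℂ, ω = plueck (Fin 5) a b}

/-- The affine cone over the Schubert variety `Ω(1,4) ⊂ G(1, P^4)` of lines in `P^4` meeting
the fixed line `⟨e₀, e₁⟩`. -/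
def omega14Cone : Set (Fin 5 × Fin 5 → ℂ) :=
  {ω | ∃ a b : Fin 5 → ℂ, ω = plueck (Fin 5) a b ∧
    (ω = 0 ∨ ∃ v : Fin 5 → ℂ, v ≠ 0 ∧ v ∈ Submodule.span ℂ {a, b} ∧
      v ∈ Submodule.span ℂ ({Pi.single 0 1, Pi.single 1 1} : Set (Fin 5 → ℂ)))}

section AuxiliaryLemmas

open Submodule Module

local notation "F5" => (Fin 5 → ℂ)

lemma plueck_self' (a : F5) : plueck (Fin 5) a a = 0 := by
  funext p; simp [plueck]; ring

lemma plueck_add_left' (a a' b : F5) :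
    plueck (Fin 5) (a + a') b = plueck (Fin 5) a b + plueck (Fin 5) a' b := by
  funext p; simp [plueck]; ring

lemma plueck_smul_left' (c : ℂ) (a b : F5) :
    plueck (Fin 5) (c • a) b = c • plueck (Fin 5) a b := by
  funext p; simp [plueck]; ring

lemma plueck_add_right' (a b b' : F5) :
    plueck (Fin 5) a (b + b') = plueck (Fin 5) a b + plueck (Fin 5) a b' := by
  funext p; simp [plueck]; ring

lemma plueck_smul_right' (c : ℂ) (a b : F5) :
    plueck (Fin 5) a (c • b) = c • plueck (Fin 5) a b := by
  funext p; simp [plueck]; ring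

lemma plueck_neg_swap (a b : F5) : plueck (Fin 5) b (-a) = plueck (Fin 5) a b := by
  funext p; simp [plueck]; ring

lemma plueck_shear (a b : F5) (t : ℂ) :
    plueck (Fin 5) a (b - t • a) = plueck (Fin 5) a b := by
  funext p; simp [plueck]; ring

def j2 : Fin 2 → Fin 5 := ![0, 1]
def j3 : Fin 3 → Fin 5 := ![2, 3, 4]

/-- parametrized Segre embedding associated to a family of 5 vectors -/
def iota5 (g : Fin 5 → F5) : (Fin 2 × Fin 3 → ℂ) →ₗ[ℂ] (Fin 5 × Fin 5 → ℂ) where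
  toFun x := fun p => ∑ q : Fin 2 × Fin 3, x q * plueck (Fin 5) (g (j2 q.1)) (g (j3 q.2)) p
  map_add' x y := by funext p; simp [add_mul, Finset.sum_add_distrib]
  map_smul' c x := by funext p; simp [Finset.mul_sum, mul_assoc]

lemma iota5_apply_prod (g : Fin 5 → F5) (a' : Fin 2 → ℂ) (b' : Fin 3 → ℂ) :
    iota5 g (fun q => a' q.1 * b' q.2) =
      plueck (Fin 5) (a' 0 • g 0 + a' 1 • g 1)
        (b' 0 • g 2 + b' 1 • g 3 + b' 2 • g 4) := by
  funext p
  simp only [iota5, LinearMap.coe_mk, AddHom.coe_mk, Fintype.sum_prod_type,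
    Fin.sum_univ_two, Fin.sum_univ_three, plueck, j2, j3]
  simp only [Matrix.cons_val_zero, Matrix.cons_val_one, Matrix.head_cons, Pi.add_apply,
    Pi.smul_apply, smul_eq_mul, Matrix.cons_val_two, Matrix.tail_cons]
  ring

lemma pair_eval (l1 l2 : F5 →ₗ[ℂ] ℂ) (y z : F5) :
    ∑ p : Fin 5 × Fin 5, l1 (Pi.single p.1 1) * l2 (Pi.single p.2 1) * plueck (Fin 5) y z p
      = l1 y * l2 z - l1 z * l2 y := by
  have ev : ∀ (l : F5 →ₗ[ℂ] ℂ) (y : F5), l y = ∑ i, l (Pi.single i 1) * y i := by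
    intro l y
    rw [LinearMap.pi_apply_eq_sum_univ]
    refine Finset.sum_congr rfl fun i _ => ?_
    have : (Pi.single i 1 : F5) = fun j => if i = j then 1 else 0 := by
      funext j; simp [Pi.single_apply, eq_comm]
    rw [this, smul_eq_mul, mul_comm]
  rw [ev l1 y, ev l2 z, ev l1 z, ev l2 y, Finset.sum_mul_sum, Finset.sum_mul_sum,
    ← Finset.sum_sub_distrib, Fintype.sum_prod_type]
  refine Finset.sum_congr rfl fun i _ => ?_
  rw [← Finset.sum_sub_distrib]
  refine Finset.sum_congr rfl fun j _ => ?_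
  simp [plueck]; ring

lemma iota5_injective (g : Fin 5 → F5) (hg : LinearIndependent ℂ g) :
    Function.Injective (iota5 g) := by
  have hcard : Fintype.card (Fin 5) = Module.finrank ℂ F5 := by simp
  set bg : Basis (Fin 5) ℂ F5 := basisOfLinearIndependentOfCardEqFinrank hg hcard with hbg
  have hcoe : ⇑bg = g := coe_basisOfLinearIndependentOfCardEqFinrank hg hcard
  set r : (Fin 5 × Fin 5 → ℂ) → (Fin 2 × Fin 3 → ℂ) := fun ω q =>
    ∑ p : Fin 5 × Fin 5, (bg.coord (j2 q.1)) (Pi.single p.1 1) *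
      (bg.coord (j3 q.2)) (Pi.single p.2 1) * ω p with hr
  have hleft : ∀ x, r (iota5 g x) = x := by
    intro x
    funext q
    have : r (iota5 g x) q = ∑ q' : Fin 2 × Fin 3, x q' *
        ((bg.coord (j2 q.1)) (g (j2 q'.1)) * (bg.coord (j3 q.2)) (g (j3 q'.2)) -
         (bg.coord (j2 q.1)) (g (j3 q'.2)) * (bg.coord (j3 q.2)) (g (j2 q'.1))) := by
      rw [hr]
      simp only [iota5, LinearMap.coe_mk, AddHom.coe_mk]
      simp_rw [Finset.mul_sum]
      rw [Finset.sum_comm]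
      refine Finset.sum_congr rfl fun q' _ => ?_
      simp_rw [mul_left_comm]
      rw [← Finset.mul_sum, pair_eval]
    rw [this, ← hcoe]
    simp only [Basis.coord_apply, Basis.repr_self_apply]
    rw [Fintype.sum_prod_type, Fin.sum_univ_two, Fin.sum_univ_three]
    fin_cases q <;>
      simp [j2, j3, Fin.sum_univ_three]
  exact Function.LeftInverse.injective hleft

lemma skew (B : F5 →ₗ[ℂ] F5 →ₗ[ℂ] ℂ) (halt : ∀ u, B u u = 0) (u w : F5) :
    B u w = - B w u := by
  have h := halt (u + w)
  simp only [map_add, LinearMap.add_apply, halt u, halt w] at h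
  linear_combination h

lemma build (B : F5 →ₗ[ℂ] F5 →ₗ[ℂ] ℂ) (halt : ∀ u, B u u = 0)
    (v w f1 : F5) (hw : w ≠ 0) (hBvw : B v w = 0) (hBf1w : B f1 w = 0)
    (hne : B v f1 ≠ 0) :
    ∃ g : Fin 5 → F5, LinearIndependent ℂ g ∧ g 0 = v ∧ g 2 = w ∧
      B (g 0) (g 2) = 0 ∧ B (g 0) (g 3) = 0 ∧ B (g 0) (g 4) = 0 ∧
      B (g 1) (g 2) = 0 ∧ B (g 1) (g 3) = 0 ∧ B (g 1) (g 4) = 0 := by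
  have hf1ne : f1 ≠ 0 := by rintro rfl; simp at hne
  have hvne : v ≠ 0 := by rintro rfl; simp at hne
  set W : Submodule ℂ F5 := LinearMap.ker (B v) ⊓ LinearMap.ker (B f1) with hW
  have hker : ∀ y : F5, 4 ≤ finrank ℂ (LinearMap.ker (B y)) := by
    intro y
    have h1 := LinearMap.finrank_range_add_finrank_ker (B y)
    have h2 : finrank ℂ (LinearMap.range (B y)) ≤ 1 := by
      simpa using Submodule.finrank_le (LinearMap.range (B y))
    have h3 : finrank ℂ F5 = 5 := by simp
    omega
  have hWrank : 3 ≤ finrank ℂ W := by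
    rw [hW]
    have h1 := hker v
    have h2 := hker f1
    have h3 := Submodule.finrank_sup_add_finrank_inf_eq (LinearMap.ker (B v)) (LinearMap.ker (B f1))
    have h4 : finrank ℂ (LinearMap.ker (B v) ⊔ LinearMap.ker (B f1) : Submodule ℂ F5) ≤ 5 := by
      simpa using Submodule.finrank_le (LinearMap.ker (B v) ⊔ LinearMap.ker (B f1))
    omega
  have hwW : w ∈ W := by
    simp only [hW, Submodule.mem_inf, LinearMap.mem_ker]
    exact ⟨hBvw, hBf1w⟩
  have hdisj : ∀ u : F5, u ∈ span ℂ {v, f1} → u ∈ W → u = 0 := by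
    intro u hu huW
    obtain ⟨s, t, hst⟩ := mem_span_pair.mp hu
    obtain ⟨h1, h2⟩ := Submodule.mem_inf.mp huW
    rw [LinearMap.mem_ker] at h1 h2
    rw [← hst] at h1 h2
    simp only [map_add, map_smul, LinearMap.add_apply, LinearMap.smul_apply,
      smul_eq_mul, halt] at h1 h2
    have hbfv : B f1 v = - B v f1 := skew B halt f1 v
    rw [hbfv] at h2
    have ht : t = 0 := by
      have : t * B v f1 = 0 := by linear_combination h1
      rcases mul_eq_zero.mp this with h | h
      · exact h
      · exact absurd h hne
    have hs : s = 0 := by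
      have : s * B v f1 = 0 := by linear_combination -h2
      rcases mul_eq_zero.mp this with h | h
      · exact h
      · exact absurd h hne
    rw [← hst, ht, hs]; simp
  -- pick f3
  have hnle1 : ¬ (W ≤ span ℂ {w}) := by
    intro hle
    have := Submodule.finrank_mono hle
    rw [finrank_span_singleton hw] at this
    omega
  obtain ⟨f3, hf3W, hf3⟩ := SetLike.not_le_iff_exists.mp hnle1
  have hf3ne : f3 ≠ 0 := by rintro rfl; exact hf3 (Submodule.zero_mem _)
  -- pick f4
  have hnle2 : ¬ (W ≤ span ℂ {w, f3}) := by
    intro hle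
    have h5 := Submodule.finrank_mono hle
    have h6 : span ℂ ({w, f3} : Set F5) = span ℂ {w} ⊔ span ℂ {f3} := by
      rw [Submodule.span_insert]
    have h7 := Submodule.finrank_sup_add_finrank_inf_eq (span ℂ {w}) (span ℂ ({f3} : Set F5))
    rw [finrank_span_singleton hw, finrank_span_singleton hf3ne] at h7
    rw [h6] at h5
    omega
  obtain ⟨f4, hf4W, hf4⟩ := SetLike.not_le_iff_exists.mp hnle2
  refine ⟨![v, f1, w, f3, f4], ?_, rfl, rfl, ?_, ?_, ?_, ?_, ?_, ?_⟩
  · -- linear independence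
    rw [Fintype.linearIndependent_iff]
    intro c hc
    rw [Fin.sum_univ_five] at hc
    simp only [Matrix.cons_val_zero, Matrix.cons_val_one, Matrix.head_cons,
      Matrix.cons_val_two, Matrix.tail_cons, Matrix.cons_val_three, Matrix.cons_val_four] at hc
    have hrest : (c 0 • v + c 1 • f1) + (c 2 • w + c 3 • f3 + c 4 • f4) = 0 := by
      linear_combination (norm := module) hc
    have huW : (c 0 • v + c 1 • f1) ∈ W := by
      have heq : c 0 • v + c 1 • f1 = -(c 2 • w + c 3 • f3 + c 4 • f4) := by
        linear_combination (norm := module) hrest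
      rw [heq]
      exact neg_mem (add_mem (add_mem (smul_mem _ _ hwW) (smul_mem _ _ hf3W)) (smul_mem _ _ hf4W))
    have hu0 : c 0 • v + c 1 • f1 = 0 :=
      hdisj _ (mem_span_pair.mpr ⟨c 0, c 1, rfl⟩) huW
    have hrest2 : c 2 • w + c 3 • f3 + c 4 • f4 = 0 := by
      rw [hu0] at hrest; simpa using hrest
    have hc4 : c 4 = 0 := by
      by_contra h4
      apply hf4
      apply mem_span_pair.mpr
      refine ⟨-((c 4)⁻¹ * c 2), -((c 4)⁻¹ * c 3), ?_⟩
      have h5 : c 4 • f4 = -(c 2 • w) - c 3 • f3 := by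
        linear_combination (norm := module) hrest2
      have h6 : f4 = (c 4)⁻¹ • (c 4 • f4) := by
        rw [smul_smul, inv_mul_cancel₀ h4, one_smul]
      rw [h5] at h6
      rw [h6]; module
    have hc3 : c 3 = 0 := by
      by_contra h3
      apply hf3
      apply mem_span_singleton.mpr
      refine ⟨-((c 3)⁻¹ * c 2), ?_⟩
      rw [hc4, zero_smul, add_zero] at hrest2
      have h5 : c 3 • f3 = -(c 2 • w) := by
        linear_combination (norm := module) hrest2
      have h6 : f3 = (c 3)⁻¹ • (c 3 • f3) := by
        rw [smul_smul, inv_mul_cancel₀ h3, one_smul]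
      rw [h5] at h6
      rw [h6]; module
    have hc2 : c 2 = 0 := by
      rw [hc4, hc3] at hrest2
      simp only [zero_smul, add_zero] at hrest2
      rcases smul_eq_zero.mp hrest2 with h | h
      · exact h
      · exact absurd h hw
    have hc0 : c 0 = 0 := by
      have h := congrArg (fun y => B y f1) hu0
      simp only [map_add, map_smul, LinearMap.add_apply, LinearMap.smul_apply,
        smul_eq_mul, halt, map_zero, LinearMap.zero_apply] at h
      have : c 0 * B v f1 = 0 := by linear_combination h
      rcases mul_eq_zero.mp this with h' | h'
      · exact h'
      · exact absurd h' hne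
    have hc1 : c 1 = 0 := by
      rw [hc0, zero_smul, zero_add] at hu0
      rcases smul_eq_zero.mp hu0 with h | h
      · exact h
      · exact absurd h hf1ne
    intro i; fin_cases i <;> assumption
  · simpa using hBvw
  · simpa using (Submodule.mem_inf.mp hf3W).1
  · simpa using (Submodule.mem_inf.mp hf4W).1
  · simpa using hBf1w
  · simpa using (Submodule.mem_inf.mp hf3W).2
  · simpa using (Submodule.mem_inf.mp hf4W).2

lemma snoc_two (x0 x1 x2 : F5) : (Fin.snoc ![x0, x1] x2 : Fin 3 → F5) = ![x0, x1, x2] := by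
  funext i; fin_cases i <;> rfl

lemma snoc_three (x0 x1 x2 x3 : F5) :
    (Fin.snoc ![x0, x1, x2] x3 : Fin 4 → F5) = ![x0, x1, x2, x3] := by
  funext i; fin_cases i <;> rfl

lemma snoc_four (x0 x1 x2 x3 x4 : F5) :
    (Fin.snoc ![x0, x1, x2, x3] x4 : Fin 5 → F5) = ![x0, x1, x2, x3, x4] := by
  funext i; fin_cases i <;> rfl

/-- pick a vector outside the span of an independent family of < 5 vectors -/
lemma exists_outside {n : ℕ} (hn : n < 5) (v : Fin n → F5) (hv : LinearIndependent ℂ v) :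
    ∃ x : F5, x ∉ span ℂ (Set.range v) := by
  have hnle : ¬ ((⊤ : Submodule ℂ F5) ≤ span ℂ (Set.range v)) := by
    intro hle
    have h1 := Submodule.finrank_mono hle
    rw [finrank_top, finrank_span_eq_card hv] at h1
    simp at h1
    omega
  obtain ⟨x, -, hx⟩ := SetLike.not_le_iff_exists.mp hnle
  exact ⟨x, hx⟩

lemma exists_good_basis (B : F5 →ₗ[ℂ] F5 →ₗ[ℂ] ℂ) (halt : ∀ u, B u u = 0)
    (a b : F5) (hab : LinearIndependent ℂ ![a, b]) (hB : B a b = 0) :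
    ∃ g : Fin 5 → F5, LinearIndependent ℂ g ∧
      plueck (Fin 5) (g 0) (g 2) = plueck (Fin 5) a b ∧
      B (g 0) (g 2) = 0 ∧ B (g 0) (g 3) = 0 ∧ B (g 0) (g 4) = 0 ∧
      B (g 1) (g 2) = 0 ∧ B (g 1) (g 3) = 0 ∧ B (g 1) (g 4) = 0 := by
  have hpair := LinearIndependent.pair_iff.mp hab
  have hane : a ≠ 0 := by
    intro h; have := (hpair 1 0 (by rw [h]; simp)).1; simp at this
  have hbne : b ≠ 0 := by
    intro h; have := (hpair 0 1 (by rw [h]; simp)).2; simp at this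
  by_cases hC1 : ∃ u, B b u = 0 ∧ B a u ≠ 0
  · obtain ⟨u, hu1, hu2⟩ := hC1
    obtain ⟨g, hg, hg0, hg2, hrest⟩ := build B halt a b u hbne hB
      (by rw [skew B halt u b, hu1]; ring) hu2
    exact ⟨g, hg, by rw [hg0, hg2], hrest⟩
  by_cases hC2 : ∃ u, B a u = 0 ∧ B b u ≠ 0
  · obtain ⟨u, hu1, hu2⟩ := hC2
    have hw : -a ≠ 0 := by simpa using hane
    obtain ⟨g, hg, hg0, hg2, hrest⟩ := build B halt b (-a) u hw
      (by rw [map_neg, skew B halt b a, hB]; ring)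
      (by rw [map_neg, skew B halt u a, hu1]; ring) hu2
    exact ⟨g, hg, by rw [hg0, hg2, plueck_neg_swap], hrest⟩
  push_neg at hC1 hC2
  by_cases hBa : ∃ u0, B a u0 ≠ 0
  · -- case 3a : B b = lam • B a, use w = b - lam • a which is in the radical
    obtain ⟨u0, hu0⟩ := hBa
    set lam : ℂ := B b u0 / B a u0 with hlam
    have hprop : ∀ u, B b u = lam * B a u := by
      intro u
      have h1 : B a (u - (B a u / B a u0) • u0) = 0 := by
        simp only [map_sub, map_smul, smul_eq_mul]
        field_simp
        ring
      have h2 := hC2 _ h1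
      simp only [map_sub, map_smul, smul_eq_mul] at h2
      have h3 : B b u = (B a u / B a u0) * B b u0 := by linear_combination h2
      rw [h3, hlam]; field_simp
    set w : Fin 5 → ℂ := b - lam • a with hwdef
    have hwne : w ≠ 0 := by
      intro h
      have : (-lam) • a + (1 : ℂ) • b = 0 := by
        rw [hwdef] at h; linear_combination (norm := module) h
      exact one_ne_zero (hpair _ _ this).2
    have hrad : ∀ u, B w u = 0 := by
      intro u
      rw [hwdef]
      simp only [map_sub, map_smul, LinearMap.sub_apply, LinearMap.smul_apply, smul_eq_mul]
      have := hprop u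
      linear_combination this
    obtain ⟨g, hg, hg0, hg2, hrest⟩ := build B halt a w u0 hwne
      (by rw [hwdef]; simp only [map_sub, map_smul, smul_eq_mul, hB, halt]; ring)
      (by rw [skew B halt u0 w, hrad u0]; ring) hu0
    exact ⟨g, hg, by rw [hg0, hg2, hwdef, plueck_shear], hrest⟩
  · -- case 3b : both a and b are in the radical
    push_neg at hBa
    have hBb : ∀ u, B b u = 0 := fun u => hC2 u (hBa u)
    -- extend a, b to a basis a, b, c0, c1, c2
    obtain ⟨c0, hc0⟩ := exists_outside (by omega) ![a, b] hab
    have li3 : LinearIndependent ℂ ![a, b, c0] := by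
      rw [← snoc_two]; exact linearIndependent_fin_snoc.mpr ⟨hab, hc0⟩
    obtain ⟨c1, hc1⟩ := exists_outside (by omega) ![a, b, c0] li3
    have li4 : LinearIndependent ℂ ![a, b, c0, c1] := by
      rw [← snoc_three]; exact linearIndependent_fin_snoc.mpr ⟨li3, hc1⟩
    obtain ⟨c2, hc2⟩ := exists_outside (by omega) ![a, b, c0, c1] li4
    have li5 : LinearIndependent ℂ ![a, b, c0, c1, c2] := by
      rw [← snoc_four]; exact linearIndependent_fin_snoc.mpr ⟨li4, hc2⟩
    set c : Fin 3 → (Fin 5 → ℂ) := ![c0, c1, c2] with hc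
    -- the 3x3 antisymmetric matrix has determinant 0
    set A : Matrix (Fin 3) (Fin 3) ℂ := Matrix.of (fun i j => B (c i) (c j)) with hA
    have hdet : A.det = 0 := by
      have htr : A.transpose = -A := by
        ext i j
        simp only [Matrix.transpose_apply, Matrix.neg_apply, hA, Matrix.of_apply]
        rw [skew B halt (c j) (c i)]
      have h1 : A.det = -A.det := by
        conv_lhs => rw [← Matrix.det_transpose, htr]
        rw [Matrix.det_neg]
        norm_num
      linear_combination h1 / 2
    obtain ⟨k, hkne, hk⟩ := Matrix.exists_mulVec_eq_zero_iff.mpr hdet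
    set f1 : Fin 5 → ℂ := k 0 • c 0 + k 1 • c 1 + k 2 • c 2 with hf1
    have hBcf1 : ∀ i, B (c i) f1 = 0 := by
      intro i
      have := congrFun hk i
      simp only [Matrix.mulVec, dotProduct, Fin.sum_univ_three, hA,
        Matrix.of_apply, Pi.zero_apply] at this
      rw [hf1]
      simp only [map_add, map_smul, smul_eq_mul]
      linear_combination this
    have hspan : span ℂ (Set.range ![a, b, c0, c1, c2]) = ⊤ := by
      apply Submodule.eq_top_of_finrank_eq
      rw [finrank_span_eq_card li5]
      simp
    have hBf1 : ∀ u, B f1 u = 0 := by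
      intro u
      have hu : u ∈ span ℂ (Set.range ![a, b, c0, c1, c2]) := by
        rw [hspan]; exact Submodule.mem_top
      refine Submodule.span_induction (fun y hy => ?_) (by simp)
        (fun y z _ _ hy hz => by rw [map_add, hy, hz, add_zero])
        (fun t y _ hy => by rw [map_smul, hy, smul_zero]) hu
      obtain ⟨i, rfl⟩ := hy
      have h0 := hBcf1 0
      have h1 := hBcf1 1
      have h2 := hBcf1 2
      simp only [hc, Matrix.cons_val_zero, Matrix.cons_val_one, Matrix.head_cons,
        Matrix.cons_val_two, Matrix.tail_cons] at h0 h1 h2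
      fin_cases i
      · show B f1 a = 0
        rw [skew B halt f1 a, hBa f1, neg_zero]
      · show B f1 b = 0
        rw [skew B halt f1 b, hBb f1, neg_zero]
      · show B f1 c0 = 0
        rw [skew B halt f1 c0, h0, neg_zero]
      · show B f1 c1 = 0
        rw [skew B halt f1 c1, h1, neg_zero]
      · show B f1 c2 = 0
        rw [skew B halt f1 c2, h2, neg_zero]
    have hksome : ∃ j, k j ≠ 0 := by
      by_contra h; push_neg at h; exact hkne (funext fun j => h j)
    have li3' : LinearIndependent ℂ ![a, f1, b] := by
      rw [Fintype.linearIndependent_iff]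
      intro d hd
      rw [Fin.sum_univ_three] at hd
      simp only [Matrix.cons_val_zero, Matrix.cons_val_one, Matrix.head_cons,
        Matrix.cons_val_two, Matrix.tail_cons] at hd
      have hsum : ∑ i, (![d 0, d 2, d 1 * k 0, d 1 * k 1, d 1 * k 2]) i •
          (![a, b, c0, c1, c2]) i = 0 := by
        rw [Fin.sum_univ_five]
        simp only [Matrix.cons_val_zero, Matrix.cons_val_one, Matrix.head_cons,
          Matrix.cons_val_two, Matrix.tail_cons, Matrix.cons_val_three, Matrix.cons_val_four]
        rw [hf1] at hd
        simp only [hc] at hd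
        simp only [Matrix.cons_val_zero, Matrix.cons_val_one, Matrix.head_cons,
          Matrix.cons_val_two, Matrix.tail_cons] at hd
        linear_combination (norm := module) hd
      have h5 := Fintype.linearIndependent_iff.mp li5 _ hsum
      have hd0 : d 0 = 0 := by simpa using h5 0
      have hd2 : d 2 = 0 := by simpa using h5 1
      have hd1 : d 1 = 0 := by
        obtain ⟨j, hj⟩ := hksome
        have hz : d 1 * k j = 0 := by
          fin_cases j
          · simpa using h5 2
          · simpa using h5 3
          · simpa using h5 4
        rcases mul_eq_zero.mp hz with h | h
        · exact h
        · exact absurd h hj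
      intro i; fin_cases i <;> assumption
    obtain ⟨f3, hf3⟩ := exists_outside (by omega) ![a, f1, b] li3'
    have li4' : LinearIndependent ℂ ![a, f1, b, f3] := by
      rw [← snoc_three]
      exact linearIndependent_fin_snoc.mpr ⟨li3', hf3⟩
    obtain ⟨f4, hf4⟩ := exists_outside (by omega) ![a, f1, b, f3] li4'
    have li5' : LinearIndependent ℂ ![a, f1, b, f3, f4] := by
      rw [← snoc_four]
      exact linearIndependent_fin_snoc.mpr ⟨li4', hf4⟩
    refine ⟨![a, f1, b, f3, f4], li5', rfl, ?_, ?_, ?_, ?_, ?_, ?_⟩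
    · simpa using hB
    · simpa using hBa f3
    · simpa using hBa f4
    · simpa using hBf1 b
    · simpa using hBf1 f3
    · simpa using hBf1 f4

lemma indep_of_plueck_ne (a b : F5) (h : plueck (Fin 5) a b ≠ 0) :
    LinearIndependent ℂ ![a, b] := by
  rw [LinearIndependent.pair_iff]
  intro s t hst
  by_contra hcon
  rw [not_and_or] at hcon
  apply h
  rcases eq_or_ne t 0 with ht | ht
  · have hs : s ≠ 0 := by
      rcases hcon with h' | h'
      · exact h'
      · exact absurd ht h'
    have ha : a = 0 := by
      rw [ht, zero_smul, add_zero] at hst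
      rcases smul_eq_zero.mp hst with h' | h'
      · exact absurd h' hs
      · exact h'
    funext p; simp [plueck, ha]
  · have hb : b = (-(t⁻¹ * s)) • a := by
      have h5 : t • b = -(s • a) := by linear_combination (norm := module) hst
      have h6 : b = t⁻¹ • (t • b) := by rw [smul_smul, inv_mul_cancel₀ ht, one_smul]
      rw [h5] at h6
      rw [h6]; module
    funext p; simp [plueck, hb]; ring

/-- the alternating bilinear form associated to a hyperplane -/
def Bphi (φ : (Fin 5 × Fin 5 → ℂ) →ₗ[ℂ] ℂ) : (Fin 5 → ℂ) →ₗ[ℂ] (Fin 5 → ℂ) →ₗ[ℂ] ℂ :=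
  LinearMap.mk₂ ℂ (fun u w => φ (plueck (Fin 5) u w))
    (fun u u' w => by rw [plueck_add_left', map_add])
    (fun c u w => by rw [plueck_smul_left', map_smul])
    (fun u w w' => by rw [plueck_add_right', map_add])
    (fun c u w => by rw [plueck_smul_right', map_smul])

lemma Bphi_alt (φ : (Fin 5 × Fin 5 → ℂ) →ₗ[ℂ] ℂ) : ∀ u, Bphi φ u u = 0 := by
  intro u
  show φ (plueck (Fin 5) u u) = 0
  rw [plueck_self', map_zero]

lemma plueck_adjust (v w z : F5) (hz0 : z 0 = 0) (hz1 : z 1 = 0) (hz2 : z 2 = w 2)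
    (hz3 : z 3 = w 3) (hz4 : z 4 = w 4) (hv2 : v 2 = 0) (hv3 : v 3 = 0) (hv4 : v 4 = 0)
    (hkey : v 0 * w 1 - v 1 * w 0 = 0) :
    plueck (Fin 5) v z = plueck (Fin 5) v w := by
  have hw01 : v 0 * w 1 = v 1 * w 0 := by linear_combination hkey
  funext p
  obtain ⟨i, j⟩ := p
  show v i * z j - v j * z i = v i * w j - v j * w i
  fin_cases i <;> fin_cases j <;>
    simp only [Fin.zero_eta, Fin.mk_one, show ((⟨2, by omega⟩ : Fin 5)) = 2 from rfl,
      show ((⟨3, by omega⟩ : Fin 5)) = 3 from rfl, show ((⟨4, by omega⟩ : Fin 5)) = 4 from rfl,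
      hz0, hz1, hz2, hz3, hz4, hv2, hv3, hv4] <;>
    (try simp only [hw01]) <;> ring

end AuxiliaryLemmas
section MoreAux

open Submodule Module

/-- the standard basis of `ℂ⁵` -/
def stdb : Fin 5 → (Fin 5 → ℂ) := fun i => Pi.single i 1

lemma stdb_li : LinearIndependent ℂ stdb := by
  have h : ⇑(Pi.basisFun ℂ (Fin 5)) = stdb := by
    funext i
    simp [stdb, Pi.basisFun_apply]
  rw [← h]
  exact (Pi.basisFun ℂ (Fin 5)).linearIndependent

end MoreAux

/-- (a) The Schubert variety `Ω(1,4)` of lines meeting a fixed line admits a hyperplane section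
(in the Plücker embedding) projectively isomorphic to the Segre threefold `P^1 × P^2`;
(b) consequently every smooth hyperplane section of `G(2, ℂ^5)` is swept out by copies of the
Segre threefold. -/
theorem schubert_segre_and_hyperplane_sections_swept :
    (∃ φ : (Fin 5 × Fin 5 → ℂ) →ₗ[ℂ] ℂ, φ ≠ 0 ∧
      ∃ ι : (Fin 2 × Fin 3 → ℂ) →ₗ[ℂ] (Fin 5 × Fin 5 → ℂ), Function.Injective ι ∧
        ι '' segreCone23 = omega14Cone ∩ {ω | φ ω = 0}) ∧
    (∀ φ : (Fin 5 × Fin 5 → ℂ) →ₗ[ℂ] ℂ, φ ≠ 0 →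
      IsSmoothProjVar (Fin 5 × Fin 5) (grassCone25 ∩ {ω | φ ω = 0}) 5 →
      ∀ x ∈ grassCone25 ∩ {ω | φ ω = 0}, x ≠ 0 →
        ∃ ι : (Fin 2 × Fin 3 → ℂ) →ₗ[ℂ] (Fin 5 × Fin 5 → ℂ), Function.Injective ι ∧
          ι '' segreCone23 ⊆ grassCone25 ∩ {ω | φ ω = 0} ∧ x ∈ ι '' segreCone23) := by
  constructor
  · -- part (a)
    refine ⟨LinearMap.proj ((0 : Fin 5), (1 : Fin 5)), ?_, iota5 stdb,
      iota5_injective stdb stdb_li, ?_⟩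
    · intro h
      have := DFunLike.congr_fun h (fun _ => (1 : ℂ))
      simp at this
    · apply Set.Subset.antisymm
      · -- image of Segre cone lands in Ω(1,4) ∩ H
        rintro ω ⟨xx, ⟨a', b', rfl⟩, rfl⟩
        rw [iota5_apply_prod]
        constructor
        · -- membership in omega14Cone
          refine ⟨a' 0 • stdb 0 + a' 1 • stdb 1,
            b' 0 • stdb 2 + b' 1 • stdb 3 + b' 2 • stdb 4, rfl, ?_⟩
          by_cases ha' : a' 0 = 0 ∧ a' 1 = 0
          · left
            have hU : a' 0 • stdb 0 + a' 1 • stdb 1 = 0 := by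
              rw [ha'.1, ha'.2]; simp
            rw [hU]
            funext p; simp [plueck]
          · right
            refine ⟨a' 0 • stdb 0 + a' 1 • stdb 1, ?_,
              Submodule.subset_span (Set.mem_insert _ _), ?_⟩
            · intro h
              have h0 := congrFun h 0
              have h1 := congrFun h 1
              simp [stdb, Pi.single_apply] at h0 h1
              exact ha' ⟨h0, h1⟩
            · exact Submodule.mem_span_pair.mpr ⟨a' 0, a' 1, rfl⟩
        · -- the hyperplane vanishes on the image
          simp only [Set.mem_setOf_eq, LinearMap.proj_apply]
          simp [plueck, stdb, Pi.single_apply]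
      · -- Ω(1,4) ∩ H is contained in the image of the Segre cone
        rintro ω ⟨⟨A, bb, hω, hcase⟩, hφω⟩
        simp only [Set.mem_setOf_eq, LinearMap.proj_apply] at hφω
        rcases hcase with h0 | ⟨v, hv0, hvab, hvspan⟩
        · refine ⟨0, ⟨0, 0, by funext q; simp⟩, ?_⟩
          rw [map_zero, h0]
        · obtain ⟨s, t, hst⟩ := Submodule.mem_span_pair.mp hvab
          obtain ⟨α, β, hαβ⟩ := Submodule.mem_span_pair.mp hvspan
          have hvw : ∃ w : Fin 5 → ℂ, plueck (Fin 5) v w = plueck (Fin 5) A bb := by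
            rcases eq_or_ne t 0 with ht | ht
            · have hs : s ≠ 0 := by
                rintro rfl
                rw [ht] at hst
                simp at hst
                exact hv0 hst.symm
              refine ⟨s⁻¹ • bb, ?_⟩
              have hv : v = s • A := by rw [← hst, ht]; simp
              funext p
              simp only [plueck, hv, Pi.smul_apply, smul_eq_mul]
              field_simp
            · refine ⟨(-(t⁻¹)) • A, ?_⟩
              have hv : v = s • A + t • bb := hst.symm
              funext p
              simp only [plueck, hv, Pi.add_apply, Pi.smul_apply, smul_eq_mul]
              field_simp
              ring
          obtain ⟨w, hwp⟩ := hvw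
          have hωvw : ω = plueck (Fin 5) v w := by rw [hω, ← hwp]
          have hv0' : v 0 = α := by rw [← hαβ]; simp [Pi.single_apply]
          have hv1' : v 1 = β := by rw [← hαβ]; simp [Pi.single_apply]
          have hv2' : v 2 = 0 := by rw [← hαβ]; simp [Pi.single_apply]
          have hv3' : v 3 = 0 := by rw [← hαβ]; simp [Pi.single_apply]
          have hv4' : v 4 = 0 := by rw [← hαβ]; simp [Pi.single_apply]
          have hkey : v 0 * w 1 - v 1 * w 0 = 0 := by
            have h := hφω
            rw [hωvw] at h
            simpa [plueck] using h
          refine ⟨(fun q => (![α, β]) q.1 * (![w 2, w 3, w 4]) q.2),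
            ⟨![α, β], ![w 2, w 3, w 4], rfl⟩, ?_⟩
          rw [iota5_apply_prod]
          simp only [Matrix.cons_val_zero, Matrix.cons_val_one, Matrix.head_cons,
            Matrix.cons_val_two, Matrix.tail_cons]
          have hU : α • stdb 0 + β • stdb 1 = v := hαβ
          rw [hU, hωvw]
          exact plueck_adjust v w _
            (by simp [stdb, Pi.single_apply]) (by simp [stdb, Pi.single_apply])
            (by simp [stdb, Pi.single_apply]) (by simp [stdb, Pi.single_apply])
            (by simp [stdb, Pi.single_apply]) hv2' hv3' hv4' hkey
  · -- part (b)
    intro φ hφ hsm x hx hxne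
    obtain ⟨⟨a, bb, hab⟩, hφx⟩ := hx
    have hli : LinearIndependent ℂ ![a, bb] :=
      indep_of_plueck_ne a bb (by rw [← hab]; exact hxne)
    have hBab : Bphi φ a bb = 0 := by
      show φ (plueck (Fin 5) a bb) = 0
      rw [← hab]
      exact hφx
    obtain ⟨g, hg, hpl, h02, h03, h04, h12, h13, h14⟩ :=
      exists_good_basis (Bphi φ) (Bphi_alt φ) a bb hli hBab
    refine ⟨iota5 g, iota5_injective g hg, ?_, ?_⟩
    · rintro y ⟨xx, ⟨a', b', rfl⟩, rfl⟩
      rw [iota5_apply_prod]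
      constructor
      · exact ⟨_, _, rfl⟩
      · show φ (plueck (Fin 5) (a' 0 • g 0 + a' 1 • g 1)
          (b' 0 • g 2 + b' 1 • g 3 + b' 2 • g 4)) = 0
        have h : Bphi φ (a' 0 • g 0 + a' 1 • g 1)
            (b' 0 • g 2 + b' 1 • g 3 + b' 2 • g 4) = 0 := by
          simp only [map_add, map_smul, LinearMap.add_apply, LinearMap.smul_apply,
            smul_eq_mul, h02, h03, h04, h12, h13, h14]
          ring
        exact h
    · refine ⟨(fun q => (![(1:ℂ), 0]) q.1 * (![(1:ℂ), 0, 0]) q.2),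
        ⟨![(1:ℂ), 0], ![(1:ℂ), 0, 0], rfl⟩, ?_⟩
      rw [iota5_apply_prod]
      simp only [Matrix.cons_val_zero, Matrix.cons_val_one, Matrix.head_cons,
        Matrix.cons_val_two, Matrix.tail_cons, one_smul, zero_smul, add_zero]
      rw [hpl]
      exact hab.symm

end
end
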